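/- arXiv:2502.02535 — 3 statements merged into one kernel-verified Lean document; each statement's English description precedes it below -/
import Mathlib

section
/- In the Derrida–Retaux model, for every n ≥ 0 and k ≥ 1, E[X_{n+k}] ≥ (E[N])^k · P(X_n ≥ ak + 1). -/
open scoped ENNReal NNReal
open Filter

/-- Convolution of two `PMF`s on `ℕ`: law of the sum of independent variables. -/
noncomputable def pmfConv (μ ν : PMF ℕ) : PMF ℕ := μ.bind fun x => ν.map (x + ·)

/-- Law of the sum of `n` i.i.d. copies of a variable with law `μ`. -/
noncomputable def iidSum (μ : PMF ℕ) : ℕ → PMF ℕ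
  | 0 => PMF.pure 0
  | n + 1 => pmfConv μ (iidSum μ n)

/-- One step of the Derrida–Retaux recursion:
law of `(X^(1) + ⋯ + X^(N) - a)⁺` (truncated ℕ-subtraction is the positive part). -/
noncomputable def drStep (ν : PMF ℕ) (a : ℕ) (μ : PMF ℕ) : PMF ℕ :=
  (ν.bind fun n => iidSum μ n).map fun y => y - a

/-- The Derrida–Retaux sequence of laws: `drSeq ν μ0 a n` is the law of `X_n`. -/
noncomputable def drSeq (ν μ0 : PMF ℕ) (a : ℕ) : ℕ → PMF ℕ
  | 0 => μ0
  | n + 1 => drStep ν a (drSeq ν μ0 a n)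

/-- Mean (expectation) of a `PMF` on `ℕ`, with values in `ℝ≥0∞`. -/
noncomputable def pmfMean (μ : PMF ℕ) : ℝ≥0∞ := ∑' k : ℕ, μ k * k

/-- Moment generating (probability generating) function `s ↦ E[s^X]` of a `PMF` on `ℕ`,
as a real-valued function (the sum of the series when it converges). -/
noncomputable def genFun (μ : PMF ℕ) (s : ℝ) : ℝ := ∑' k : ℕ, (μ k).toReal * s ^ k

/-! ### Auxiliary lemmas -/

/-- Expectation of `f` against a `bind`. -/
lemma dr_tsum_bind (μ : PMF ℕ) (h : ℕ → PMF ℕ) (f : ℕ → ℝ≥0∞) :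
    ∑' k, (μ.bind h) k * f k = ∑' n, μ n * ∑' k, h n k * f k := by
  simp only [PMF.bind_apply]
  calc ∑' k, (∑' n, μ n * h n k) * f k
      = ∑' k, ∑' n, μ n * h n k * f k := by
        refine tsum_congr fun k => ?_
        rw [← ENNReal.tsum_mul_right]
    _ = ∑' n, ∑' k, μ n * h n k * f k := ENNReal.tsum_comm
    _ = ∑' n, μ n * ∑' k, h n k * f k := by
        refine tsum_congr fun n => ?_
        rw [← ENNReal.tsum_mul_left]
        exact tsum_congr fun k => by ring

/-- Expectation of `f` against a `map`. -/
lemma dr_tsum_map (ρ : PMF ℕ) (g : ℕ → ℕ) (f : ℕ → ℝ≥0∞) :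
    ∑' k, (ρ.map g) k * f k = ∑' j, ρ j * f (g j) := by
  have hmap : ρ.map g = ρ.bind fun j => PMF.pure (g j) := rfl
  rw [hmap, dr_tsum_bind]
  refine tsum_congr fun j => ?_
  congr 1
  have h1 : ∀ k, (PMF.pure (g j)) k * f k = if k = g j then f (g j) else 0 := by
    intro k
    rw [PMF.pure_apply]
    split_ifs with h
    · rw [h, one_mul]
    · rw [zero_mul]
  rw [tsum_congr h1, tsum_ite_eq]

/-- `E[(X - t)⁺]` for a `PMF` on `ℕ`, in `ℝ≥0∞`. -/
noncomputable def drG (t : ℕ) (μ : PMF ℕ) : ℝ≥0∞ := ∑' j : ℕ, μ j * (↑(j - t) : ℝ≥0∞)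

lemma drG_zero (μ : PMF ℕ) : drG 0 μ = pmfMean μ := by
  unfold drG pmfMean; simp

/-- Superadditivity of `drG` under convolution. -/
lemma drG_conv_ge (t : ℕ) (μ ν : PMF ℕ) :
    drG t μ + drG t ν ≤ drG t (pmfConv μ ν) := by
  unfold drG pmfConv
  rw [dr_tsum_bind]
  have hstep : ∀ x : ℕ, μ x * ((↑(x - t) : ℝ≥0∞) + drG t ν)
      ≤ μ x * ∑' k, (ν.map (x + ·)) k * (↑(k - t) : ℝ≥0∞) := by
    intro x
    rw [dr_tsum_map]
    refine mul_le_mul_right ?_ _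
    have h1 : ∑' y : ℕ, ν y * ((↑(x - t) : ℝ≥0∞) + ↑(y - t))
        = ((↑(x - t) : ℝ≥0∞) + drG t ν) := by
      calc ∑' y : ℕ, ν y * ((↑(x - t) : ℝ≥0∞) + ↑(y - t))
          = ∑' y : ℕ, (ν y * (↑(x - t) : ℝ≥0∞) + ν y * ↑(y - t)) :=
            tsum_congr fun y => mul_add _ _ _
        _ = (∑' y : ℕ, ν y * (↑(x - t) : ℝ≥0∞)) + ∑' y : ℕ, ν y * ↑(y - t) :=
            Summable.tsum_add ENNReal.summable ENNReal.summable
        _ = ((↑(x - t) : ℝ≥0∞) + drG t ν) := by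
            rw [ENNReal.tsum_mul_right, PMF.tsum_coe, one_mul]; rfl
    rw [← h1]
    refine ENNReal.tsum_le_tsum fun y => mul_le_mul_right ?_ _
    rw [← Nat.cast_add, Nat.cast_le]
    omega
  calc ∑' j, μ j * (↑(j - t) : ℝ≥0∞) + ∑' j, ν j * (↑(j - t) : ℝ≥0∞)
      = ∑' x, μ x * ((↑(x - t) : ℝ≥0∞) + drG t ν) := by
        have : ∑' x, μ x * ((↑(x - t) : ℝ≥0∞) + drG t ν)
            = (∑' x, μ x * (↑(x - t) : ℝ≥0∞)) + ∑' x, μ x * drG t ν := by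
          simp only [mul_add]
          exact Summable.tsum_add ENNReal.summable ENNReal.summable
        rw [this, ENNReal.tsum_mul_right, PMF.tsum_coe, one_mul]
        rfl
    _ ≤ ∑' x, μ x * ∑' k, (ν.map (x + ·)) k * (↑(k - t) : ℝ≥0∞) :=
        ENNReal.tsum_le_tsum hstep

lemma drG_iidSum_ge (t : ℕ) (μ : PMF ℕ) (n : ℕ) :
    (n : ℝ≥0∞) * drG t μ ≤ drG t (iidSum μ n) := by
  induction n with
  | zero => simp
  | succ m ih =>
    have : ((m + 1 : ℕ) : ℝ≥0∞) * drG t μ = drG t μ + (m : ℝ≥0∞) * drG t μ := by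
      push_cast; ring
    rw [this]
    calc drG t μ + (m : ℝ≥0∞) * drG t μ
        ≤ drG t μ + drG t (iidSum μ m) := add_le_add_right ih _
      _ ≤ drG t (pmfConv μ (iidSum μ m)) := drG_conv_ge _ _ _
      _ = drG t (iidSum μ (m + 1)) := rfl

/-- Key step: `E[N] · E[(X - (a+t))⁺] ≤ E[(X' - t)⁺]`. -/
lemma drG_step_ge (ν : PMF ℕ) (a t : ℕ) (μ : PMF ℕ) :
    pmfMean ν * drG (a + t) μ ≤ drG t (drStep ν a μ) := by
  unfold drStep
  have hmap : drG t ((ν.bind fun n => iidSum μ n).map fun y => y - a)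
      = ∑' n, ν n * drG (a + t) (iidSum μ n) := by
    unfold drG
    rw [dr_tsum_map, dr_tsum_bind]
    refine tsum_congr fun n => ?_
    congr 1
    refine tsum_congr fun j => ?_
    congr 2
    omega
  rw [hmap]
  have : pmfMean ν * drG (a + t) μ = ∑' n, ν n * ((n : ℝ≥0∞) * drG (a + t) μ) := by
    unfold pmfMean
    rw [← ENNReal.tsum_mul_right]
    exact tsum_congr fun n => by ring
  rw [this]
  exact ENNReal.tsum_le_tsum fun n => mul_le_mul_right (drG_iidSum_ge _ _ _) _

lemma dr_main (ν μ0 : PMF ℕ) (a : ℕ) (k : ℕ) : ∀ n : ℕ,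
    pmfMean ν ^ k * drG (a * k) (drSeq ν μ0 a n) ≤ pmfMean (drSeq ν μ0 a (n + k)) := by
  induction k with
  | zero => intro n; simp [drG_zero]
  | succ m ih =>
    intro n
    have h1 : pmfMean ν * drG (a + a * m) (drSeq ν μ0 a n)
        ≤ drG (a * m) (drSeq ν μ0 a (n + 1)) := by
      have := drG_step_ge ν a (a * m) (drSeq ν μ0 a n)
      exact this
    have h2 : a * (m + 1) = a + a * m := by ring
    calc pmfMean ν ^ (m + 1) * drG (a * (m + 1)) (drSeq ν μ0 a n)
        = pmfMean ν ^ m * (pmfMean ν * drG (a + a * m) (drSeq ν μ0 a n)) := by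
          rw [h2]; ring
      _ ≤ pmfMean ν ^ m * drG (a * m) (drSeq ν μ0 a (n + 1)) := mul_le_mul_right h1 _
      _ ≤ pmfMean (drSeq ν μ0 a ((n + 1) + m)) := ih (n + 1)
      _ = pmfMean (drSeq ν μ0 a (n + (m + 1))) := by ring_nf

/-- `E[X_{n+k}] ≥ (E[N])^k · P(X_n ≥ ak + 1)` for all `n ≥ 0`, `k ≥ 1`. -/
theorem dr_mean_ge_tail (ν μ0 : PMF ℕ) (a : ℕ) (ha : 1 ≤ a) (hν0 : ν 0 = 0)
    (hm1 : 1 < pmfMean ν) (hmfin : pmfMean ν < ⊤) (hX0 : pmfMean μ0 < ⊤)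
    (n k : ℕ) (hk : 1 ≤ k) :
    pmfMean ν ^ k * (drSeq ν μ0 a n).toMeasure {x : ℕ | a * k + 1 ≤ x}
      ≤ pmfMean (drSeq ν μ0 a (n + k)) := by
  have htail : (drSeq ν μ0 a n).toMeasure {x : ℕ | a * k + 1 ≤ x}
      ≤ drG (a * k) (drSeq ν μ0 a n) := by
    rw [PMF.toMeasure_apply (p := drSeq ν μ0 a n) (s := {x : ℕ | a * k + 1 ≤ x}) (by measurability)]
    unfold drG
    refine ENNReal.tsum_le_tsum fun x => ?_
    by_cases hx : x ∈ {x : ℕ | a * k + 1 ≤ x}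
    · rw [Set.indicator_of_mem hx]
      have : (1 : ℝ≥0∞) ≤ (↑(x - a * k) : ℝ≥0∞) := by
        rw [show (1 : ℝ≥0∞) = ((1 : ℕ) : ℝ≥0∞) by simp, Nat.cast_le]
        simp only [Set.mem_setOf_eq] at hx
        omega
      calc (drSeq ν μ0 a n) x = (drSeq ν μ0 a n) x * 1 := by rw [mul_one]
        _ ≤ _ := mul_le_mul_right this _
    · rw [Set.indicator_of_notMem hx]; exact zero_le
  exact le_trans (mul_le_mul_right htail _) (dr_main ν μ0 a k n)
end

section
/- In the Derrida–Retaux model with m := E[N] > 1, for 1 ≤ s ≤ m^{1/a}: (m − 1)·s·F'_{n+1}(s) − a·F_{n+1}(s) ≥ (m·G(F_n(s))/(F_n(s)·s^a)) · ((m − 1)·s·F'_n(s) − a·F_n(s)). -/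
open scoped ENNReal NNReal
open Filter

open Finset


lemma sub_pow_le_aux (s x : ℝ) (hx : 0 ≤ x) (hxs : x ≤ s) (k : ℕ) :
    s ^ k - x ^ k ≤ (k : ℝ) * s ^ (k - 1) * (s - x) := by
  induction k with
  | zero => simp
  | succ k ih =>
    rcases Nat.eq_zero_or_pos k with h | hk
    · subst h; simp
    · have hs : 0 ≤ s := le_trans hx hxs
      have hpow : s * s ^ (k - 1) = s ^ k := by
        rw [← pow_succ']
        congr 1
        omega
      have h2 : s * (s ^ k - x ^ k) ≤ s * ((k : ℝ) * s ^ (k - 1) * (s - x)) :=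
        mul_le_mul_of_nonneg_left ih hs
      have h3 : s * ((k : ℝ) * s ^ (k - 1) * (s - x)) = (k : ℝ) * s ^ k * (s - x) := by
        rw [← hpow]; ring
      have h4 : x ^ k * (s - x) ≤ s ^ k * (s - x) :=
        mul_le_mul_of_nonneg_right (pow_le_pow_left₀ hx hxs k) (by linarith)
      have h5 : s ^ (k + 1) - x ^ (k + 1) = s * (s ^ k - x ^ k) + x ^ k * (s - x) := by ring
      have : ((k + 1 : ℕ) : ℝ) * s ^ (k + 1 - 1) * (s - x) = (k : ℝ) * s ^ k * (s - x) + s ^ k * (s - x) := by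
        simp only [Nat.add_sub_cancel]
        push_cast
        ring
      rw [h5, this]
      linarith

lemma derivFormula (c : ℕ → ℝ) (hc : ∀ k, 0 ≤ c k) (s : ℝ) (hs : 1 ≤ s)
    (hsum : Summable fun k => c k * s ^ k)
    (hdiff : DifferentiableAt ℝ (fun x => ∑' k, c k * x ^ k) s) :
    Summable (fun k => c k * k * s ^ (k - 1)) ∧
      deriv (fun x => ∑' k, c k * x ^ k) s = ∑' k, c k * k * s ^ (k - 1) := by
  have hs0 : (0 : ℝ) < s := lt_of_lt_of_le one_pos hs
  set f : ℝ → ℝ := fun x => ∑' k, c k * x ^ k with hf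
  set d : ℝ := deriv f s with hd
  have hsum_x : ∀ x : ℝ, 0 ≤ x → x ≤ s → Summable fun k => c k * x ^ k := by
    intro x hx hxs
    refine Summable.of_nonneg_of_le (fun k => mul_nonneg (hc k) (pow_nonneg hx k)) (fun k => ?_) hsum
    exact mul_le_mul_of_nonneg_left (pow_le_pow_left₀ hx hxs k) (hc k)
  have hIoo : Set.Ioo (0 : ℝ) s ∈ nhdsWithin s (Set.Iio s) :=
    Ioo_mem_nhdsLT_of_mem ⟨hs0, le_refl s⟩
  have hslope : Tendsto (slope f s) (nhdsWithin s (Set.Iio s)) (nhds d) := by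
    have := hasDerivAt_iff_tendsto_slope.mp hdiff.hasDerivAt
    exact this.mono_left (nhdsWithin_mono _ (fun x hx => ne_of_lt hx))
  -- Part 1: partial sums of derivative series bounded by d
  have hnonneg : ∀ k, 0 ≤ c k * k * s ^ (k - 1) := fun k =>
    mul_nonneg (mul_nonneg (hc k) (Nat.cast_nonneg k)) (pow_nonneg (le_of_lt hs0) _)
  have key1 : ∀ N : ℕ, ∑ k ∈ range N, c k * k * s ^ (k - 1) ≤ d := by
    intro N
    set g : ℝ → ℝ := fun x => ∑ k ∈ range N, c k * x ^ k with hg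
    have hgd : HasDerivAt g (∑ k ∈ range N, c k * (k * s ^ (k - 1))) s := by
      apply HasDerivAt.fun_sum
      intro k _
      exact (hasDerivAt_pow k s).const_mul (c k)
    have hgs : Tendsto (slope g s) (nhdsWithin s (Set.Iio s)) (nhds (∑ k ∈ range N, c k * (k * s ^ (k - 1)))) :=
      (hasDerivAt_iff_tendsto_slope.mp hgd).mono_left (nhdsWithin_mono _ (fun x hx => ne_of_lt hx))
    have hev : ∀ᶠ x in nhdsWithin s (Set.Iio s), slope g s x ≤ slope f s x := by
      filter_upwards [hIoo] with x hx
      obtain ⟨hx0, hxs⟩ := hx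
      have hsx : Summable fun k => c k * x ^ k := hsum_x x (le_of_lt hx0) (le_of_lt hxs)
      have htail : f x - g x ≤ f s - g s := by
        have h1 : g x + ∑' k : ↑(↑(range N) : Set ℕ)ᶜ, c k * x ^ (k : ℕ) = f x :=
          Summable.sum_add_tsum_compl hsx
        have h2 : g s + ∑' k : ↑(↑(range N) : Set ℕ)ᶜ, c k * s ^ (k : ℕ) = f s :=
          Summable.sum_add_tsum_compl hsum
        have h3 : ∑' k : ↑(↑(range N) : Set ℕ)ᶜ, c k * x ^ (k : ℕ)
            ≤ ∑' k : ↑(↑(range N) : Set ℕ)ᶜ, c k * s ^ (k : ℕ) := by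
          apply Summable.tsum_le_tsum _ (hsx.subtype _) (hsum.subtype _)
          intro k
          exact mul_le_mul_of_nonneg_left (pow_le_pow_left₀ (le_of_lt hx0) (le_of_lt hxs) _) (hc _)
        linarith
      have hxs' : x - s < 0 := by linarith
      simp only [slope_def_field]
      rw [div_le_div_right_of_neg hxs']
      linarith
    have := le_of_tendsto_of_tendsto hgs hslope hev
    calc ∑ k ∈ range N, c k * k * s ^ (k - 1)
        = ∑ k ∈ range N, c k * (k * s ^ (k - 1)) := by
          apply Finset.sum_congr rfl; intro k _; ring
      _ ≤ d := this
  have hsummable : Summable fun k => c k * k * s ^ (k - 1) :=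
    summable_of_sum_range_le hnonneg key1
  refine ⟨hsummable, ?_⟩
  have hub : ∑' k, c k * k * s ^ (k - 1) ≤ d := Real.tsum_le_of_sum_range_le hnonneg key1
  set S : ℝ := ∑' k, c k * k * s ^ (k - 1) with hS
  have hlb : d ≤ S := by
    have hev : ∀ᶠ x in nhdsWithin s (Set.Iio s), slope f s x ≤ S := by
      filter_upwards [hIoo] with x hx
      obtain ⟨hx0, hxs⟩ := hx
      have hsx : Summable fun k => c k * x ^ k := hsum_x x (le_of_lt hx0) (le_of_lt hxs)
      have hdiff' : f s - f x = ∑' k, (c k * s ^ k - c k * x ^ k) := (Summable.tsum_sub hsum hsx).symm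
      have hle : f s - f x ≤ S * (s - x) := by
        rw [hdiff']
        have hsum2 : Summable fun k => c k * k * s ^ (k - 1) * (s - x) := hsummable.mul_right _
        have := Summable.tsum_le_tsum (f := fun k => c k * s ^ k - c k * x ^ k)
          (g := fun k => c k * k * s ^ (k - 1) * (s - x)) ?_ (hsum.sub hsx) hsum2
        · rw [tsum_mul_right] at this
          exact this
        · intro k
          have h1 : s ^ k - x ^ k ≤ (k : ℝ) * s ^ (k - 1) * (s - x) :=
            sub_pow_le_aux s x (le_of_lt hx0) (le_of_lt hxs) k
          have := mul_le_mul_of_nonneg_left h1 (hc k)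
          calc c k * s ^ k - c k * x ^ k = c k * (s ^ k - x ^ k) := by ring
            _ ≤ c k * ((k : ℝ) * s ^ (k - 1) * (s - x)) := this
            _ = c k * k * s ^ (k - 1) * (s - x) := by ring
      have hxs' : x - s < 0 := by linarith
      simp only [slope_def_field]
      rw [div_le_iff_of_neg hxs']
      nlinarith [hle]
    exact le_of_tendsto hslope hev
  linarith



lemma tsum_pure_mul (c : ℕ) (h : ℕ → ℝ≥0∞) : ∑' k, (PMF.pure c) k * h k = h c := by
  simp [PMF.pure_apply]

lemma tsum_bind_mul (μ : PMF ℕ) (g : ℕ → PMF ℕ) (h : ℕ → ℝ≥0∞) :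
    ∑' k, (μ.bind g) k * h k = ∑' x, μ x * ∑' k, g x k * h k := by
  simp only [PMF.bind_apply]
  calc ∑' k, (∑' x, μ x * g x k) * h k
      = ∑' k, ∑' x, μ x * g x k * h k := by
        congr 1; ext k; exact ENNReal.tsum_mul_right.symm
    _ = ∑' x, ∑' k, μ x * g x k * h k := ENNReal.tsum_comm
    _ = ∑' x, μ x * ∑' k, g x k * h k := by
        congr 1; ext x
        rw [← ENNReal.tsum_mul_left]
        congr 1; ext k; ring

lemma tsum_map_mul (μ : PMF ℕ) (f : ℕ → ℕ) (h : ℕ → ℝ≥0∞) :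
    ∑' k, (μ.map f) k * h k = ∑' y, μ y * h (f y) := by
  rw [PMF.map, tsum_bind_mul]
  congr 1
  ext y
  simp only [Function.comp_apply]
  rw [tsum_pure_mul]

noncomputable def ee (μ : PMF ℕ) (t : ℝ≥0∞) : ℝ≥0∞ := ∑' k, μ k * t ^ k
noncomputable def emm (μ : PMF ℕ) (t : ℝ≥0∞) : ℝ≥0∞ := ∑' k, μ k * ((k : ℝ≥0∞) * t ^ k)

lemma ee_conv (μ ν : PMF ℕ) (t : ℝ≥0∞) : ee (pmfConv μ ν) t = ee μ t * ee ν t := by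
  rw [pmfConv, ee, tsum_bind_mul]
  calc ∑' x, μ x * ∑' k, (ν.map (x + ·)) k * t ^ k
      = ∑' x, μ x * ∑' j, ν j * t ^ (x + j) :=
        tsum_congr fun x => by rw [tsum_map_mul]
    _ = ∑' x, (μ x * t ^ x) * ∑' j, ν j * t ^ j := by
        refine tsum_congr fun x => ?_
        rw [← ENNReal.tsum_mul_left (a := μ x), ← ENNReal.tsum_mul_left (a := μ x * t ^ x)]
        refine tsum_congr fun j => ?_
        rw [pow_add]; ring
    _ = (∑' x, μ x * t ^ x) * ∑' j, ν j * t ^ j := ENNReal.tsum_mul_right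
    _ = ee μ t * ee ν t := rfl

lemma emm_conv (μ ν : PMF ℕ) (t : ℝ≥0∞) :
    emm (pmfConv μ ν) t = emm μ t * ee ν t + ee μ t * emm ν t := by
  rw [pmfConv, emm, tsum_bind_mul]
  calc ∑' x, μ x * ∑' k, (ν.map (x + ·)) k * ((k : ℝ≥0∞) * t ^ k)
      = ∑' x, μ x * ∑' j, ν j * (((x + j : ℕ) : ℝ≥0∞) * t ^ (x + j)) :=
        tsum_congr fun x => by rw [tsum_map_mul]
    _ = ∑' x, (μ x * ((x : ℝ≥0∞) * t ^ x) * ∑' j, ν j * t ^ j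
          + μ x * t ^ x * ∑' j, ν j * ((j : ℝ≥0∞) * t ^ j)) := by
        refine tsum_congr fun x => ?_
        rw [← ENNReal.tsum_mul_left (a := μ x * ((x : ℝ≥0∞) * t ^ x)),
          ← ENNReal.tsum_mul_left (a := μ x * t ^ x),
          ← Summable.tsum_add ENNReal.summable ENNReal.summable,
          ← ENNReal.tsum_mul_left (a := μ x)]
        refine tsum_congr fun j => ?_
        push_cast
        rw [pow_add]
        ring
    _ = emm μ t * ee ν t + ee μ t * emm ν t := by
        rw [Summable.tsum_add ENNReal.summable ENNReal.summable,
          ENNReal.tsum_mul_right, ENNReal.tsum_mul_right]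
        rfl

lemma ee_pure0 (t : ℝ≥0∞) : ee (PMF.pure 0) t = 1 := by
  rw [ee, tsum_pure_mul]; simp

lemma emm_pure0 (t : ℝ≥0∞) : emm (PMF.pure 0) t = 0 := by
  rw [emm, tsum_pure_mul]; simp

lemma ee_iid (μ : PMF ℕ) (t : ℝ≥0∞) (x : ℕ) : ee (iidSum μ x) t = (ee μ t) ^ x := by
  induction x with
  | zero => rw [iidSum, ee_pure0, pow_zero]
  | succ x ih => rw [iidSum, ee_conv, ih, pow_succ]; ring

lemma emm_iid (μ : PMF ℕ) (t : ℝ≥0∞) (x : ℕ) :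
    ee μ t * emm (iidSum μ x) t = (x : ℝ≥0∞) * emm μ t * (ee μ t) ^ x := by
  induction x with
  | zero => rw [iidSum, emm_pure0]; simp
  | succ x ih =>
    rw [iidSum, emm_conv, ee_iid]
    push_cast
    calc ee μ t * (emm μ t * ee μ t ^ x + ee μ t * emm (iidSum μ x) t)
        = emm μ t * ee μ t ^ (x + 1) + ee μ t * (ee μ t * emm (iidSum μ x) t) := by ring
      _ = emm μ t * ee μ t ^ (x + 1) + ee μ t * ((x : ℝ≥0∞) * emm μ t * ee μ t ^ x) := by rw [ih]
      _ = ((x : ℝ≥0∞) + 1) * emm μ t * ee μ t ^ (x + 1) := by ring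

lemma rearrange_aux {a b c d : ℝ≥0∞} (hab : a ≤ b) (hcd : c ≤ d) :
    a * d + b * c ≤ a * c + b * d := by
  obtain ⟨p, rfl⟩ := exists_add_of_le hab
  obtain ⟨q, rfl⟩ := exists_add_of_le hcd
  have h : a * c + (a + p) * (c + q) = (a * (c + q) + (a + p) * c) + p * q := by ring
  rw [h]
  exact le_self_add

lemma chebyshev_ennreal (ν : PMF ℕ) (w : ℝ≥0∞) (hw : 1 ≤ w) :
    (∑' x, ν x * x) * (∑' x, ν x * w ^ x) ≤ ∑' x, ν x * ((x : ℝ≥0∞) * w ^ x) := by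
  set A := ∑' x, ν x * ((x : ℝ≥0∞) * w ^ x) with hA
  rcases eq_or_ne A ⊤ with h | h
  · rw [h]; exact le_top
  have key : 2 * ((∑' x, ν x * x) * (∑' x, ν x * w ^ x)) ≤ 2 * A := by
    have lhs_eq : 2 * ((∑' x, ν x * x) * (∑' x, ν x * w ^ x))
        = ∑' x : ℕ, ∑' z : ℕ, (ν x * ν z * ((x : ℝ≥0∞) * w ^ z) + ν x * ν z * ((z : ℝ≥0∞) * w ^ x)) := by
      have e1 : ∑' x : ℕ, ∑' z : ℕ, ν x * ν z * ((x : ℝ≥0∞) * w ^ z)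
          = (∑' x : ℕ, ν x * x) * (∑' z : ℕ, ν z * w ^ z) := by
        calc ∑' x : ℕ, ∑' z : ℕ, ν x * ν z * ((x : ℝ≥0∞) * w ^ z)
            = ∑' x : ℕ, (ν x * x) * ∑' z : ℕ, ν z * w ^ z := by
              refine tsum_congr fun x => ?_
              rw [← ENNReal.tsum_mul_left (a := ν x * x)]
              exact tsum_congr fun z => by ring
          _ = _ := ENNReal.tsum_mul_right
      have e2 : ∑' x : ℕ, ∑' z : ℕ, ν x * ν z * ((z : ℝ≥0∞) * w ^ x)
          = (∑' z : ℕ, ν z * z) * (∑' x : ℕ, ν x * w ^ x) := by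
        calc ∑' x : ℕ, ∑' z : ℕ, ν x * ν z * ((z : ℝ≥0∞) * w ^ x)
            = ∑' x : ℕ, (ν x * w ^ x) * ∑' z : ℕ, ν z * z := by
              refine tsum_congr fun x => ?_
              rw [← ENNReal.tsum_mul_left (a := ν x * w ^ x)]
              exact tsum_congr fun z => by ring
          _ = _ := by rw [ENNReal.tsum_mul_right, mul_comm]
      calc 2 * ((∑' x : ℕ, ν x * x) * (∑' x : ℕ, ν x * w ^ x))
          = (∑' x : ℕ, ν x * x) * (∑' x : ℕ, ν x * w ^ x)
            + (∑' x : ℕ, ν x * x) * (∑' x : ℕ, ν x * w ^ x) := two_mul _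
        _ = ∑' x : ℕ, ∑' z : ℕ, ν x * ν z * ((x : ℝ≥0∞) * w ^ z)
            + ∑' x : ℕ, ∑' z : ℕ, ν x * ν z * ((z : ℝ≥0∞) * w ^ x) := by rw [e1, e2]
        _ = _ := by
            rw [← Summable.tsum_add ENNReal.summable ENNReal.summable]
            exact tsum_congr fun x => (Summable.tsum_add ENNReal.summable ENNReal.summable).symm
    have rhs_eq : 2 * A
        = ∑' x : ℕ, ∑' z : ℕ, (ν x * ν z * ((x : ℝ≥0∞) * w ^ x) + ν x * ν z * ((z : ℝ≥0∞) * w ^ z)) := by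
      have e1 : ∑' x : ℕ, ∑' z : ℕ, ν x * ν z * ((x : ℝ≥0∞) * w ^ x) = A := by
        calc ∑' x : ℕ, ∑' z : ℕ, ν x * ν z * ((x : ℝ≥0∞) * w ^ x)
            = ∑' x : ℕ, (ν x * ((x : ℝ≥0∞) * w ^ x)) * ∑' z : ℕ, ν z := by
              refine tsum_congr fun x => ?_
              rw [← ENNReal.tsum_mul_left (a := ν x * ((x : ℝ≥0∞) * w ^ x))]
              exact tsum_congr fun z => by ring
          _ = A := by
              rw [ENNReal.tsum_mul_right, PMF.tsum_coe, mul_one]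
      have e2 : ∑' x : ℕ, ∑' z : ℕ, ν x * ν z * ((z : ℝ≥0∞) * w ^ z) = A := by
        calc ∑' x : ℕ, ∑' z : ℕ, ν x * ν z * ((z : ℝ≥0∞) * w ^ z)
            = ∑' x : ℕ, ν x * ∑' z : ℕ, ν z * ((z : ℝ≥0∞) * w ^ z) := by
              refine tsum_congr fun x => ?_
              rw [← ENNReal.tsum_mul_left (a := ν x)]
              exact tsum_congr fun z => by ring
          _ = A := by
              rw [ENNReal.tsum_mul_right, PMF.tsum_coe, one_mul]
      calc 2 * A = A + A := two_mul _
        _ = ∑' x : ℕ, ∑' z : ℕ, ν x * ν z * ((x : ℝ≥0∞) * w ^ x)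
            + ∑' x : ℕ, ∑' z : ℕ, ν x * ν z * ((z : ℝ≥0∞) * w ^ z) := by rw [e1, e2]
        _ = _ := by
            rw [← Summable.tsum_add ENNReal.summable ENNReal.summable]
            exact tsum_congr fun x => (Summable.tsum_add ENNReal.summable ENNReal.summable).symm
    rw [lhs_eq, rhs_eq]
    refine ENNReal.tsum_le_tsum fun x => ENNReal.tsum_le_tsum fun z => ?_
    rcases le_total x z with hxz | hxz
    · have h1 : (x : ℝ≥0∞) ≤ z := by exact_mod_cast hxz
      have h2 : w ^ x ≤ w ^ z := pow_le_pow_right₀ hw hxz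
      calc ν x * ν z * ((x : ℝ≥0∞) * w ^ z) + ν x * ν z * ((z : ℝ≥0∞) * w ^ x)
          = ν x * ν z * ((x : ℝ≥0∞) * w ^ z + (z : ℝ≥0∞) * w ^ x) := by ring
        _ ≤ ν x * ν z * ((x : ℝ≥0∞) * w ^ x + (z : ℝ≥0∞) * w ^ z) :=
            mul_le_mul_right (rearrange_aux h1 h2) _
        _ = ν x * ν z * ((x : ℝ≥0∞) * w ^ x) + ν x * ν z * ((z : ℝ≥0∞) * w ^ z) := by ring
    · have h1 : (z : ℝ≥0∞) ≤ x := by exact_mod_cast hxz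
      have h2 : w ^ z ≤ w ^ x := pow_le_pow_right₀ hw hxz
      calc ν x * ν z * ((x : ℝ≥0∞) * w ^ z) + ν x * ν z * ((z : ℝ≥0∞) * w ^ x)
          = ν x * ν z * ((z : ℝ≥0∞) * w ^ x + (x : ℝ≥0∞) * w ^ z) := by ring
        _ ≤ ν x * ν z * ((z : ℝ≥0∞) * w ^ z + (x : ℝ≥0∞) * w ^ x) :=
            mul_le_mul_right (rearrange_aux h1 h2) _
        _ = ν x * ν z * ((x : ℝ≥0∞) * w ^ x) + ν x * ν z * ((z : ℝ≥0∞) * w ^ z) := by ring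
  have h2 : (2 : ℝ≥0∞) ≠ 0 := two_ne_zero
  have h2' : (2 : ℝ≥0∞) ≠ ⊤ := ENNReal.ofNat_ne_top
  exact (ENNReal.mul_le_mul_iff_right h2 h2').mp key


lemma pmf_term_ofReal (μ : PMF ℕ) (s : ℝ) (hs : 0 ≤ s) (k : ℕ) :
    μ k * (ENNReal.ofReal s) ^ k = ENNReal.ofReal ((μ k).toReal * s ^ k) := by
  rw [ENNReal.ofReal_mul ENNReal.toReal_nonneg, ENNReal.ofReal_toReal (PMF.apply_ne_top μ k),
    ENNReal.ofReal_pow hs]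

lemma pmf_term_ofReal' (μ : PMF ℕ) (s : ℝ) (hs : 0 ≤ s) (k : ℕ) :
    μ k * ((k : ℝ≥0∞) * (ENNReal.ofReal s) ^ k)
      = ENNReal.ofReal ((μ k).toReal * k * s ^ k) := by
  rw [show (μ k).toReal * k * s ^ k = (μ k).toReal * ((k : ℝ) * s ^ k) by ring,
    ENNReal.ofReal_mul ENNReal.toReal_nonneg, ENNReal.ofReal_toReal (PMF.apply_ne_top μ k),
    ENNReal.ofReal_mul (by positivity), ENNReal.ofReal_pow hs, ENNReal.ofReal_natCast]

lemma tsum_ofReal_inv {g : ℕ → ℝ} (hg : ∀ y, 0 ≤ g y) {r : ℝ} (hr : 0 ≤ r)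
    (h : ∑' y, ENNReal.ofReal (g y) = ENNReal.ofReal r) :
    Summable g ∧ ∑' y, g y = r := by
  have hne : (∑' y, ENNReal.ofReal (g y)) ≠ ⊤ := by rw [h]; exact ENNReal.ofReal_ne_top
  have hsg : Summable g :=
    (ENNReal.summable_toReal hne).congr fun y => by rw [ENNReal.toReal_ofReal (hg y)]
  refine ⟨hsg, ?_⟩
  have h2 : (∑' y, ENNReal.ofReal (g y)).toReal = ∑' y, (ENNReal.ofReal (g y)).toReal :=
    ENNReal.tsum_toReal_eq fun y => ENNReal.ofReal_ne_top
  rw [h, ENNReal.toReal_ofReal hr] at h2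
  rw [h2]
  exact tsum_congr fun y => by rw [ENNReal.toReal_ofReal (hg y)]

lemma ee_eq_ofReal (μ : PMF ℕ) (s : ℝ) (hs : 0 ≤ s)
    (h : Summable fun k => (μ k).toReal * s ^ k) :
    ee μ (ENNReal.ofReal s) = ENNReal.ofReal (genFun μ s) := by
  rw [ee, genFun,
    ENNReal.ofReal_tsum_of_nonneg (fun k => mul_nonneg ENNReal.toReal_nonneg (pow_nonneg hs k)) h]
  exact tsum_congr fun k => pmf_term_ofReal μ s hs k

lemma emm_eq_ofReal (μ : PMF ℕ) (s : ℝ) (hs : 0 ≤ s)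
    (h : Summable fun k => (μ k).toReal * k * s ^ k) :
    emm μ (ENNReal.ofReal s) = ENNReal.ofReal (∑' k, (μ k).toReal * k * s ^ k) := by
  rw [emm, ENNReal.ofReal_tsum_of_nonneg
    (fun k => mul_nonneg (mul_nonneg ENNReal.toReal_nonneg (Nat.cast_nonneg k)) (pow_nonneg hs k)) h]
  exact tsum_congr fun k => pmf_term_ofReal' μ s hs k

lemma pmf_toReal_summable (μ : PMF ℕ) : Summable fun k => (μ k).toReal :=
  ENNReal.summable_toReal (by rw [PMF.tsum_coe]; exact ENNReal.one_ne_top)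

lemma pmf_tsum_toReal (μ : PMF ℕ) : ∑' k, (μ k).toReal = 1 := by
  have := ENNReal.tsum_toReal_eq (f := fun k => μ k) (fun k => PMF.apply_ne_top μ k)
  rw [PMF.tsum_coe] at this
  simpa using this.symm

lemma one_le_genFun (μ : PMF ℕ) (s : ℝ) (hs : 1 ≤ s)
    (h : Summable fun k => (μ k).toReal * s ^ k) : 1 ≤ genFun μ s := by
  rw [genFun, ← pmf_tsum_toReal μ]
  refine Summable.tsum_le_tsum (fun k => ?_) (pmf_toReal_summable μ) h
  calc (μ k).toReal = (μ k).toReal * 1 := (mul_one _).symm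
    _ ≤ (μ k).toReal * s ^ k :=
      mul_le_mul_of_nonneg_left (one_le_pow₀ hs) ENNReal.toReal_nonneg

lemma bernoulli_bound (m : ℝ) (hm1 : 1 < m) (a q : ℕ) (ha : 1 ≤ a) (hq : 1 ≤ q) (hqa : q ≤ a)
    (s : ℝ) (hs0 : 0 ≤ s) (hs2 : s ≤ m ^ (1 / (a : ℝ))) :
    (a : ℝ) * s ^ q ≤ (q : ℝ) * (m - 1) + a := by
  have hm0 : (0 : ℝ) ≤ m := by linarith
  have ha0 : (0 : ℝ) < a := by exact_mod_cast ha
  have hq0 : (0 : ℝ) < q := by exact_mod_cast hq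
  have hqa' : (q : ℝ) ≤ a := by exact_mod_cast hqa
  have h1 : s ^ q ≤ (m ^ (1 / (a : ℝ))) ^ q := pow_le_pow_left₀ hs0 hs2 q
  have h2 : (m ^ (1 / (a : ℝ))) ^ q = m ^ ((q : ℝ) / (a : ℝ)) := by
    rw [← Real.rpow_natCast (m ^ (1 / (a : ℝ))) q, ← Real.rpow_mul hm0]
    congr 1
    field_simp
  have h3 : m ^ ((q : ℝ) / (a : ℝ)) ≤ ((q : ℝ) / a) * m + (1 - (q : ℝ) / a) * 1 := by
    have := Real.geom_mean_le_arith_mean2_weighted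
      (w₁ := (q : ℝ) / a) (w₂ := 1 - (q : ℝ) / a) (p₁ := m) (p₂ := 1)
      (by positivity) (by rw [sub_nonneg]; exact div_le_one_of_le₀ hqa' (le_of_lt ha0))
      hm0 zero_le_one (by ring)
    simpa using this
  have h4 : s ^ q ≤ 1 + ((q : ℝ) / a) * (m - 1) := by
    rw [h2] at h1
    nlinarith
  have h5 : (a : ℝ) * s ^ q ≤ a * (1 + ((q : ℝ) / a) * (m - 1)) :=
    mul_le_mul_of_nonneg_left h4 (le_of_lt ha0)
  have h6 : (a : ℝ) * (1 + ((q : ℝ) / a) * (m - 1)) = a + (q : ℝ) * (m - 1) := by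
    field_simp
  linarith


set_option maxHeartbeats 1000000 in
theorem dr_main_s15 (ν μ0 : PMF ℕ) (a : ℕ) (ha : 1 ≤ a) (hν0 : ν 0 = 0)
    (hmsum : Summable fun k : ℕ => (ν k).toReal * k)
    (m : ℝ) (hm : m = ∑' k : ℕ, (ν k).toReal * k) (hm1 : 1 < m)
    (μn μ1 : PMF ℕ) (hμ1 : μ1 = drStep ν a μn)
    (s : ℝ) (hs1 : 1 ≤ s) (hs2 : s ≤ m ^ (1 / (a : ℝ)))
    (hFn : Summable fun k : ℕ => (μn k).toReal * s ^ k)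
    (hFn1 : Summable fun k : ℕ => (μ1 k).toReal * s ^ k)
    (hG : Summable fun k : ℕ => (ν k).toReal * genFun μn s ^ k)
    (hdn : DifferentiableAt ℝ (genFun μn) s)
    (hdn1 : DifferentiableAt ℝ (genFun μ1) s) :
    m * genFun ν (genFun μn s) / (genFun μn s * s ^ a)
        * ((m - 1) * s * deriv (genFun μn) s - a * genFun μn s)
      ≤ (m - 1) * s * deriv (genFun μ1) s - a * genFun μ1 s := by
  have hs0 : (0 : ℝ) ≤ s := le_trans zero_le_one hs1
  have hs0' : (0 : ℝ) < s := lt_of_lt_of_le one_pos hs1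
  set t : ℝ≥0∞ := ENNReal.ofReal s with ht
  set μY : PMF ℕ := ν.bind fun x => iidSum μn x with hμY
  set F : ℝ := genFun μn s with hF
  set F1 : ℝ := genFun μ1 s with hF1
  set H : ℝ := genFun ν F with hH
  -- derivative formulas
  have hder_n := derivFormula (fun k => (μn k).toReal) (fun k => ENNReal.toReal_nonneg) s hs1 hFn hdn
  have hder_n1 := derivFormula (fun k => (μ1 k).toReal) (fun k => ENNReal.toReal_nonneg) s hs1 hFn1 hdn1
  set B : ℝ := ∑' k, (μn k).toReal * k * s ^ k with hB
  set B1 : ℝ := ∑' k, (μ1 k).toReal * k * s ^ k with hB1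
  have hmul : ∀ (μ : PMF ℕ), Summable (fun k => (μ k).toReal * k * s ^ (k - 1)) →
      Summable (fun k => (μ k).toReal * k * s ^ k) ∧
        s * ∑' k, (μ k).toReal * k * s ^ (k - 1) = ∑' k, (μ k).toReal * k * s ^ k := by
    intro μ hsum
    have hcongr : ∀ k : ℕ, s * ((μ k).toReal * k * s ^ (k - 1)) = (μ k).toReal * k * s ^ k := by
      intro k
      cases k with
      | zero => simp
      | succ k => rw [show k + 1 - 1 = k from rfl]; rw [pow_succ]; ring
    constructor
    · exact (hsum.mul_left s).congr hcongr
    · rw [← tsum_mul_left]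
      exact tsum_congr hcongr
  have hBsum : Summable fun k => (μn k).toReal * k * s ^ k := (hmul μn hder_n.1).1
  have hBeq : s * deriv (genFun μn) s = B := by
    rw [show deriv (genFun μn) s = deriv (fun x => ∑' k, (μn k).toReal * x ^ k) s from rfl,
      hder_n.2]
    exact (hmul μn hder_n.1).2
  have hB1sum : Summable fun k => (μ1 k).toReal * k * s ^ k := (hmul μ1 hder_n1.1).1
  have hB1eq : s * deriv (genFun μ1) s = B1 := by
    rw [show deriv (genFun μ1) s = deriv (fun x => ∑' k, (μ1 k).toReal * x ^ k) s from rfl,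
      hder_n1.2]
    exact (hmul μ1 hder_n1.1).2
  -- basic positivity
  have hFge1 : 1 ≤ F := one_le_genFun μn s hs1 hFn
  have hF0 : 0 < F := lt_of_lt_of_le one_pos hFge1
  have hH0 : 0 ≤ H := tsum_nonneg fun k => mul_nonneg ENNReal.toReal_nonneg (pow_nonneg (by linarith) k)
  have hB0 : 0 ≤ B := tsum_nonneg fun k => by positivity
  have hB10 : 0 ≤ B1 := tsum_nonneg fun k => by positivity
  have hF10 : 0 ≤ F1 := tsum_nonneg fun k => mul_nonneg ENNReal.toReal_nonneg (pow_nonneg hs0 k)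
  -- ENNReal identities
  have hee_n : ee μn t = ENNReal.ofReal F := ee_eq_ofReal μn s hs0 hFn
  have hee_1 : ee μ1 t = ENNReal.ofReal F1 := ee_eq_ofReal μ1 s hs0 hFn1
  have hemm_n : emm μn t = ENNReal.ofReal B := emm_eq_ofReal μn s hs0 hBsum
  have hemm_1 : emm μ1 t = ENNReal.ofReal B1 := emm_eq_ofReal μ1 s hs0 hB1sum
  have heeY : ee μY t = ENNReal.ofReal H := by
    rw [ee, hμY, tsum_bind_mul]
    have : ∀ x : ℕ, (∑' k, (iidSum μn x) k * t ^ k) = (ENNReal.ofReal F) ^ x := by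
      intro x
      rw [← hee_n]
      exact ee_iid μn t x
    calc ∑' x, ν x * ∑' k, (iidSum μn x) k * t ^ k
        = ∑' x, ν x * (ENNReal.ofReal F) ^ x := tsum_congr fun x => by rw [this x]
      _ = ∑' x, ENNReal.ofReal ((ν x).toReal * F ^ x) :=
          tsum_congr fun x => pmf_term_ofReal ν F (le_of_lt hF0) x
      _ = ENNReal.ofReal H := by
          rw [← ENNReal.ofReal_tsum_of_nonneg
            (fun x => mul_nonneg ENNReal.toReal_nonneg (pow_nonneg (le_of_lt hF0) x)) hG]
          rfl
  have hμ1map : μ1 = μY.map (fun y => y - a) := hμ1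
  -- defs over Y
  have hee1Y : ee μ1 t = ∑' y, μY y * t ^ (y - a) := by
    rw [ee, hμ1map, tsum_map_mul]
  have hemm1Y : emm μ1 t = ∑' y, μY y * (((y - a : ℕ) : ℝ≥0∞) * t ^ (y - a)) := by
    rw [emm, hμ1map, tsum_map_mul]
  -- finiteness of emm μY
  have ht1 : (1 : ℝ≥0∞) ≤ t := ENNReal.one_le_ofReal.mpr hs1
  have hemmY_le : emm μY t ≤ t ^ a * emm μ1 t + (a : ℝ≥0∞) * ee μY t := by
    rw [emm, hemm1Y, ee, ← ENNReal.tsum_mul_left, ← ENNReal.tsum_mul_left,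
      ← Summable.tsum_add ENNReal.summable ENNReal.summable]
    refine ENNReal.tsum_le_tsum fun y => ?_
    have hc : (y : ℝ≥0∞) ≤ ((y - a : ℕ) : ℝ≥0∞) + (a : ℝ≥0∞) := by
      rw [← Nat.cast_add]
      exact Nat.cast_le.mpr (by omega)
    have hp : t ^ y ≤ t ^ a * t ^ (y - a) := by
      rw [← pow_add]
      exact pow_le_pow_right₀ ht1 (by omega)
    calc μY y * ((y : ℝ≥0∞) * t ^ y)
        ≤ μY y * ((((y - a : ℕ) : ℝ≥0∞) + (a : ℝ≥0∞)) * t ^ y) := by gcongr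
      _ = μY y * (((y - a : ℕ) : ℝ≥0∞) * t ^ y) + (a : ℝ≥0∞) * (μY y * t ^ y) := by ring
      _ ≤ t ^ a * (μY y * (((y - a : ℕ) : ℝ≥0∞) * t ^ (y - a))) + (a : ℝ≥0∞) * (μY y * t ^ y) := by
          refine add_le_add_left ?_ _
          calc μY y * (((y - a : ℕ) : ℝ≥0∞) * t ^ y)
              ≤ μY y * (((y - a : ℕ) : ℝ≥0∞) * (t ^ a * t ^ (y - a))) := by gcongr
            _ = t ^ a * (μY y * (((y - a : ℕ) : ℝ≥0∞) * t ^ (y - a))) := by ring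
  have hemmY_ne : emm μY t ≠ ⊤ := by
    refine ne_top_of_le_ne_top ?_ hemmY_le
    rw [hemm_1, heeY]
    exact ENNReal.add_ne_top.mpr ⟨ENNReal.mul_ne_top (by
      exact ENNReal.pow_ne_top ENNReal.ofReal_ne_top) ENNReal.ofReal_ne_top,
      ENNReal.mul_ne_top (ENNReal.natCast_ne_top a) ENNReal.ofReal_ne_top⟩
  set Er : ℝ := (emm μY t).toReal with hEr
  have hemmY : emm μY t = ENNReal.ofReal Er := (ENNReal.ofReal_toReal hemmY_ne).symm
  have hEr0 : 0 ≤ Er := ENNReal.toReal_nonneg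
  -- Chebyshev chain
  have hcheb : m * B * H ≤ F * Er := by
    have hmENN : (∑' x : ℕ, ν x * (x : ℝ≥0∞)) = ENNReal.ofReal m := by
      rw [hm, ENNReal.ofReal_tsum_of_nonneg (fun k => by positivity) hmsum]
      refine tsum_congr fun k => ?_
      rw [ENNReal.ofReal_mul ENNReal.toReal_nonneg, ENNReal.ofReal_toReal (PMF.apply_ne_top ν k),
        ENNReal.ofReal_natCast]
    have hGENN : (∑' x : ℕ, ν x * (ENNReal.ofReal F) ^ x) = ENNReal.ofReal H := by
      calc ∑' x : ℕ, ν x * (ENNReal.ofReal F) ^ x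
          = ∑' x : ℕ, ENNReal.ofReal ((ν x).toReal * F ^ x) :=
            tsum_congr fun x => pmf_term_ofReal ν F (le_of_lt hF0) x
        _ = ENNReal.ofReal H := by
            rw [← ENNReal.ofReal_tsum_of_nonneg
              (fun x => mul_nonneg ENNReal.toReal_nonneg (pow_nonneg (le_of_lt hF0) x)) hG]
            rfl
    have hXY : ENNReal.ofReal F * emm μY t
        = emm μn t * ∑' x : ℕ, ν x * ((x : ℝ≥0∞) * (ENNReal.ofReal F) ^ x) := by
      calc ENNReal.ofReal F * emm μY t
          = ee μn t * emm μY t := by rw [hee_n]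
        _ = ee μn t * ∑' x : ℕ, ν x * emm (iidSum μn x) t := by
            rw [emm, hμY, tsum_bind_mul]
            rfl
        _ = ∑' x : ℕ, ν x * (ee μn t * emm (iidSum μn x) t) := by
            rw [← ENNReal.tsum_mul_left]
            exact tsum_congr fun x => by ring
        _ = ∑' x : ℕ, ν x * ((x : ℝ≥0∞) * emm μn t * (ee μn t) ^ x) :=
            tsum_congr fun x => by rw [emm_iid]
        _ = emm μn t * ∑' x : ℕ, ν x * ((x : ℝ≥0∞) * (ee μn t) ^ x) := by
            rw [← ENNReal.tsum_mul_left]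
            exact tsum_congr fun x => by ring
        _ = emm μn t * ∑' x : ℕ, ν x * ((x : ℝ≥0∞) * (ENNReal.ofReal F) ^ x) := by simp only [hee_n]
    have hch := chebyshev_ennreal ν (ENNReal.ofReal F) (ENNReal.one_le_ofReal.mpr hFge1)
    rw [hmENN, hGENN] at hch
    have chain : ENNReal.ofReal (m * B * H) ≤ ENNReal.ofReal (F * Er) := by
      calc ENNReal.ofReal (m * B * H)
          = ENNReal.ofReal B * (ENNReal.ofReal m * ENNReal.ofReal H) := by
            rw [← ENNReal.ofReal_mul (by linarith : (0:ℝ) ≤ m), ← ENNReal.ofReal_mul (by positivity)]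
            ring_nf
        _ ≤ ENNReal.ofReal B * ∑' x : ℕ, ν x * ((x : ℝ≥0∞) * (ENNReal.ofReal F) ^ x) :=
            mul_le_mul_right hch _
        _ = ENNReal.ofReal F * emm μY t := by rw [hXY, hemm_n]
        _ = ENNReal.ofReal (F * Er) := by
            rw [hemmY, ← ENNReal.ofReal_mul (le_of_lt hF0)]
    exact (ENNReal.ofReal_le_ofReal_iff (by positivity)).mp chain
  -- real sums over Y
  set P : ℕ → ℝ := fun y => (μY y).toReal with hP
  have hg1 : Summable (fun y => P y * s ^ y) ∧ ∑' y, P y * s ^ y = H := by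
    refine tsum_ofReal_inv (fun y => mul_nonneg ENNReal.toReal_nonneg (pow_nonneg hs0 y)) hH0 ?_
    rw [← heeY, ee]
    exact tsum_congr fun y => (pmf_term_ofReal μY s hs0 y).symm
  have hg2 : Summable (fun y => P y * y * s ^ y) ∧ ∑' y, P y * y * s ^ y = Er := by
    refine tsum_ofReal_inv (fun y => by positivity) hEr0 ?_
    rw [← hemmY, emm]
    exact tsum_congr fun y => (pmf_term_ofReal' μY s hs0 y).symm
  have hg3 : Summable (fun y => P y * s ^ (y - a)) ∧ ∑' y, P y * s ^ (y - a) = F1 := by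
    refine tsum_ofReal_inv (fun y => mul_nonneg ENNReal.toReal_nonneg (pow_nonneg hs0 _)) hF10 ?_
    rw [← hee_1, hee1Y]
    refine tsum_congr fun y => ?_
    rw [ENNReal.ofReal_mul ENNReal.toReal_nonneg,
      ENNReal.ofReal_toReal (PMF.apply_ne_top μY y), ENNReal.ofReal_pow hs0]
  have hg4 : Summable (fun y => P y * ((y - a : ℕ) : ℝ) * s ^ (y - a)) ∧
      ∑' y, P y * ((y - a : ℕ) : ℝ) * s ^ (y - a) = B1 := by
    refine tsum_ofReal_inv (fun y => by positivity) hB10 ?_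
    rw [← hemm_1, hemm1Y]
    refine tsum_congr fun y => ?_
    rw [show P y * ((y - a : ℕ) : ℝ) * s ^ (y - a) = P y * (((y - a : ℕ) : ℝ) * s ^ (y - a)) by ring,
      ENNReal.ofReal_mul ENNReal.toReal_nonneg, ENNReal.ofReal_toReal (PMF.apply_ne_top μY y),
      ENNReal.ofReal_mul (by positivity), ENNReal.ofReal_pow hs0, ENNReal.ofReal_natCast]
  -- corrections
  set G1 : ℕ → ℝ := fun y => if y < a then P y * (s ^ a - s ^ y) else 0 with hG1
  set G2 : ℕ → ℝ := fun y => if y < a then P y * ((a : ℝ) - y) * s ^ y else 0 with hG2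
  have hG1sum : Summable G1 := summable_of_ne_finset_zero (s := Finset.range a)
    (fun y hy => by simp only [hG1]; rw [if_neg (by simpa using hy)])
  have hG2sum : Summable G2 := summable_of_ne_finset_zero (s := Finset.range a)
    (fun y hy => by simp only [hG2]; rw [if_neg (by simpa using hy)])
  set C : ℝ := ∑' y, G1 y with hC
  set C2 : ℝ := ∑' y, G2 y with hC2
  -- R1
  have hR1 : s ^ a * F1 = H + C := by
    have key : ∀ y : ℕ, s ^ a * (P y * s ^ (y - a)) = P y * s ^ y + G1 y := by
      intro y
      by_cases hy : y < a
      · have h0 : y - a = 0 := by omega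
        simp only [hG1, if_pos hy, h0, pow_zero]
        ring
      · have h0 : a + (y - a) = y := by omega
        simp only [hG1, if_neg hy]
        rw [show s ^ a * (P y * s ^ (y - a)) = P y * (s ^ a * s ^ (y - a)) by ring, ← pow_add, h0]
        ring
    calc s ^ a * F1 = s ^ a * ∑' y, P y * s ^ (y - a) := by rw [hg3.2]
      _ = ∑' y, s ^ a * (P y * s ^ (y - a)) := (tsum_mul_left).symm
      _ = ∑' y, (P y * s ^ y + G1 y) := tsum_congr key
      _ = H + C := by rw [Summable.tsum_add hg1.1 hG1sum, hg1.2]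
  -- R2
  have hR2 : s ^ a * B1 = Er - a * H + C2 := by
    have key : ∀ y : ℕ, s ^ a * (P y * ((y - a : ℕ) : ℝ) * s ^ (y - a))
        = P y * y * s ^ y - (a : ℝ) * (P y * s ^ y) + G2 y := by
      intro y
      by_cases hy : y < a
      · have h0 : y - a = 0 := by omega
        simp only [hG2, if_pos hy, h0, pow_zero, Nat.cast_zero]
        ring
      · have h0 : a + (y - a) = y := by omega
        have hcast : ((y - a : ℕ) : ℝ) = (y : ℝ) - a := by
          rw [Nat.cast_sub (by omega)]
        simp only [hG2, if_neg hy, hcast]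
        rw [show s ^ a * (P y * ((y : ℝ) - a) * s ^ (y - a))
          = P y * ((y : ℝ) - a) * (s ^ a * s ^ (y - a)) by ring, ← pow_add, h0]
        ring
    calc s ^ a * B1 = s ^ a * ∑' y, P y * ((y - a : ℕ) : ℝ) * s ^ (y - a) := by rw [hg4.2]
      _ = ∑' y, s ^ a * (P y * ((y - a : ℕ) : ℝ) * s ^ (y - a)) := (tsum_mul_left).symm
      _ = ∑' y, (P y * y * s ^ y - (a : ℝ) * (P y * s ^ y) + G2 y) := tsum_congr key
      _ = Er - a * H + C2 := by
          rw [Summable.tsum_add (hg2.1.sub (hg1.1.mul_left (a : ℝ))) hG2sum,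
            Summable.tsum_sub hg2.1 (hg1.1.mul_left (a : ℝ)), tsum_mul_left, hg2.2, hg1.2]
  -- correction inequality
  have hCC : a * C ≤ (m - 1) * C2 := by
    rw [hC, hC2, ← tsum_mul_left, ← tsum_mul_left]
    refine Summable.tsum_le_tsum (fun y => ?_) (hG1sum.mul_left _) (hG2sum.mul_left _)
    by_cases hy : y < a
    · simp only [hG1, hG2, if_pos hy]
      have hb := bernoulli_bound m hm1 a (a - y) ha (by omega) (by omega) s hs0 hs2
      have hcast : ((a - y : ℕ) : ℝ) = (a : ℝ) - y := by rw [Nat.cast_sub (by omega)]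
      rw [hcast] at hb
      have hsy : (0 : ℝ) < s ^ y := pow_pos hs0' y
      have hP0 : (0 : ℝ) ≤ P y := ENNReal.toReal_nonneg
      have hsa : s ^ a = s ^ (a - y) * s ^ y := by rw [← pow_add]; congr 1; omega
      have hb2 : (a : ℝ) * s ^ (a - y) * s ^ y ≤ (((a : ℝ) - y) * (m - 1) + a) * s ^ y :=
        mul_le_mul_of_nonneg_right hb (le_of_lt hsy)
      have hb3 : (a : ℝ) * (s ^ a - s ^ y) ≤ (m - 1) * (((a : ℝ) - y) * s ^ y) := by
        rw [hsa]
        nlinarith [hb2]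
      calc (a : ℝ) * (P y * (s ^ a - s ^ y)) = P y * ((a : ℝ) * (s ^ a - s ^ y)) := by ring
        _ ≤ P y * ((m - 1) * (((a : ℝ) - y) * s ^ y)) := mul_le_mul_of_nonneg_left hb3 hP0
        _ = (m - 1) * (P y * ((a : ℝ) - y) * s ^ y) := by ring
    · simp only [hG1, hG2, if_neg hy, mul_zero]
      exact le_refl 0
  -- final assembly
  have hsa0 : (0 : ℝ) < s ^ a := pow_pos hs0' a
  have e1 : s ^ a * ((m - 1) * B1 - a * F1) = (m - 1) * Er - m * a * H + ((m - 1) * C2 - a * C) := by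
    linear_combination (m - 1) * hR2 - (a : ℝ) * hR1
  have e3 : (m - 1) * (m * B * H) ≤ (m - 1) * (F * Er) :=
    mul_le_mul_of_nonneg_left hcheb (by linarith)
  have e4 : m * H * ((m - 1) * B - a * F) ≤ F * (s ^ a * ((m - 1) * B1 - a * F1)) := by
    rw [e1]
    have h5 : F * ((m - 1) * Er - m * a * H) ≤ F * ((m - 1) * Er - m * a * H + ((m - 1) * C2 - a * C)) := by
      have : (0:ℝ) ≤ (m - 1) * C2 - a * C := by linarith
      nlinarith [hF0]
    nlinarith [e3, hF0, hFge1, hH0]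
  rw [div_mul_eq_mul_div, div_le_iff₀ (by positivity)]
  have hgoal : m * H * ((m - 1) * B - a * F)
      ≤ ((m - 1) * s * deriv (genFun μ1) s - a * F1) * (F * s ^ a) := by
    have : (m - 1) * s * deriv (genFun μ1) s = (m - 1) * B1 := by rw [mul_assoc, hB1eq]
    rw [this]
    nlinarith [e4]
  calc m * H * ((m - 1) * s * deriv (genFun μn) s - a * F)
      = m * H * ((m - 1) * B - a * F) := by rw [mul_assoc (m-1), hBeq]
    _ ≤ _ := hgoal

/-- for `1 ≤ s ≤ m^{1/a}` with `m = E[N] > 1`,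
`(m−1)sF'_{n+1}(s) − aF_{n+1}(s) ≥ (mG(F_n(s))/(F_n(s)s^a))((m−1)sF'_n(s) − aF_n(s))`. -/
theorem dr_D_recursive_lower_bound (ν μ0 : PMF ℕ) (a : ℕ) (ha : 1 ≤ a) (hν0 : ν 0 = 0)
    (hmsum : Summable fun k : ℕ => (ν k).toReal * k)
    (m : ℝ) (hm : m = ∑' k : ℕ, (ν k).toReal * k) (hm1 : 1 < m)
    (n : ℕ) (s : ℝ) (hs1 : 1 ≤ s) (hs2 : s ≤ m ^ (1 / (a : ℝ)))
    (hFn : Summable fun k : ℕ => ((drSeq ν μ0 a n) k).toReal * s ^ k)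
    (hFn1 : Summable fun k : ℕ => ((drSeq ν μ0 a (n + 1)) k).toReal * s ^ k)
    (hG : Summable fun k : ℕ => (ν k).toReal * genFun (drSeq ν μ0 a n) s ^ k)
    (hdn : DifferentiableAt ℝ (genFun (drSeq ν μ0 a n)) s)
    (hdn1 : DifferentiableAt ℝ (genFun (drSeq ν μ0 a (n + 1))) s) :
    m * genFun ν (genFun (drSeq ν μ0 a n) s) / (genFun (drSeq ν μ0 a n) s * s ^ a)
        * ((m - 1) * s * deriv (genFun (drSeq ν μ0 a n)) s - a * genFun (drSeq ν μ0 a n) s)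
      ≤ (m - 1) * s * deriv (genFun (drSeq ν μ0 a (n + 1))) s
          - a * genFun (drSeq ν μ0 a (n + 1)) s := by
  exact dr_main_s15 ν μ0 a ha hν0 hmsum m hm hm1 (drSeq ν μ0 a n) (drSeq ν μ0 a (n + 1)) rfl
    s hs1 hs2 hFn hFn1 hG hdn hdn1
end

section
/- In the Derrida–Retaux model with N ≤ M almost surely (M integer ≥ 2), define D_n(s) = (M−1)·s·F'_n(s) − a·F_n(s). Then for every s ≥ 1 + (M−1)/a and n ≥ 0: D_{n+1}(s) ≤ (M·G(F_n(s))/(F_n(s)·s^a))·D_n(s). In particular, if D_0(s) < 0 then D_n(s) < 0 for all n. -/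
open scoped ENNReal NNReal
open Filter

set_option linter.unusedVariables false

noncomputable def eGen (μ : PMF ℕ) (x : ℝ≥0∞) : ℝ≥0∞ := ∑' k, μ k * x ^ k



lemma eGen_pure (n : ℕ) (x : ℝ≥0∞) : eGen (PMF.pure n) x = x ^ n := by
  unfold eGen
  rw [tsum_eq_single n (fun k hk => by simp [PMF.pure_apply, hk])]
  simp [PMF.pure_apply]

lemma eGen_bind (μ : PMF ℕ) (f : ℕ → PMF ℕ) (x : ℝ≥0∞) :
    eGen (μ.bind f) x = ∑' n, μ n * eGen (f n) x := by
  unfold eGen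
  simp only [PMF.bind_apply]
  have h1 : ∀ k : ℕ, (∑' n, μ n * f n k) * x ^ k
      = ∑' n, μ n * (f n k * x ^ k) := by
    intro k
    rw [← ENNReal.tsum_mul_right]
    exact tsum_congr fun n => by ring
  refine (tsum_congr h1).trans ?_
  rw [ENNReal.tsum_comm]
  exact tsum_congr fun n => by rw [ENNReal.tsum_mul_left]

lemma eGen_map (μ : PMF ℕ) (g : ℕ → ℕ) (x : ℝ≥0∞) :
    eGen (μ.map g) x = ∑' b, μ b * x ^ g b := by
  unfold PMF.map
  rw [eGen_bind]
  exact tsum_congr fun b => by rw [Function.comp_apply, eGen_pure]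

lemma eGen_conv (μ ρ : PMF ℕ) (x : ℝ≥0∞) :
    eGen (pmfConv μ ρ) x = eGen μ x * eGen ρ x := by
  unfold pmfConv
  rw [eGen_bind]
  have h : ∀ n : ℕ, eGen (ρ.map (n + ·)) x = x ^ n * eGen ρ x := by
    intro n
    rw [eGen_map]
    unfold eGen
    rw [← ENNReal.tsum_mul_left]
    exact tsum_congr fun b => by rw [pow_add]; ring
  calc ∑' n, μ n * eGen (ρ.map (n + ·)) x
      = ∑' n, (μ n * x ^ n) * eGen ρ x := tsum_congr fun n => by rw [h n]; ring
    _ = eGen μ x * eGen ρ x := by rw [ENNReal.tsum_mul_right]; rfl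

lemma eGen_iidSum (μ : PMF ℕ) (n : ℕ) (x : ℝ≥0∞) :
    eGen (iidSum μ n) x = (eGen μ x) ^ n := by
  induction n with
  | zero =>
    simp only [iidSum, pow_zero]
    rw [eGen_pure, pow_zero]
  | succ n ih => rw [iidSum, eGen_conv, ih, pow_succ]; ring



lemma exists_summable_gt (μ : PMF ℕ) {s : ℝ} (hs : 1 ≤ s)
    (h : Summable fun k : ℕ => (μ k).toReal * s ^ k)
    (hc : ContinuousAt (genFun μ) s) :
    ∃ t, s < t ∧ Summable fun k : ℕ => (μ k).toReal * t ^ k := by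
  by_contra hcon
  push_neg at hcon
  have hzero : ∀ t ∈ Set.Ioi s, genFun μ t = 0 := fun t ht =>
    tsum_eq_zero_of_not_summable (hcon t ht)
  have hpos : 0 < genFun μ s := by
    obtain ⟨k₀, hk₀⟩ : ∃ k, μ k ≠ 0 := by
      by_contra hall
      push_neg at hall
      have := μ.tsum_coe
      simp [hall] at this
    have hterm : 0 < (μ k₀).toReal * s ^ k₀ := by
      have := ENNReal.toReal_pos hk₀ (μ.apply_ne_top k₀)
      positivity
    refine lt_of_lt_of_le hterm (Summable.le_tsum h k₀ fun j _ => ?_)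
    have : (0:ℝ) < s := lt_of_lt_of_le one_pos hs
    positivity
  have htend : Tendsto (genFun μ) (nhdsWithin s (Set.Ioi s)) (nhds (genFun μ s)) :=
    hc.continuousWithinAt
  have htend0 : Tendsto (genFun μ) (nhdsWithin s (Set.Ioi s)) (nhds 0) := by
    refine Tendsto.congr' ?_ tendsto_const_nhds
    filter_upwards [self_mem_nhdsWithin] with t ht
    exact (hzero t ht).symm
  have := tendsto_nhds_unique htend htend0
  linarith

lemma hasDerivAt_genFun (μ : PMF ℕ) {t₀ y : ℝ} (h0 : 0 ≤ y) (hy : y < t₀)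
    (ht : Summable fun k : ℕ => (μ k).toReal * t₀ ^ k) :
    HasDerivAt (genFun μ) (∑' k : ℕ, (μ k).toReal * (k * y ^ (k - 1))) y := by
  have ht₀ : 0 < t₀ := lt_of_le_of_lt h0 hy
  obtain ⟨r, hyr, hrt⟩ : ∃ r, y < r ∧ r < t₀ := ⟨(y + t₀) / 2, by linarith, by linarith⟩
  have hr0 : 0 < r := lt_of_le_of_lt h0 hyr
  obtain ⟨B, hB⟩ : ∃ B, B = ∑' k : ℕ, (μ k).toReal * t₀ ^ k := ⟨_, rfl⟩
  have hBnn : ∀ k : ℕ, (μ k).toReal * t₀ ^ k ≤ B := by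
    intro k
    rw [hB]
    exact Summable.le_tsum ht k fun j _ => by positivity
  obtain ⟨ρ, hρ⟩ : ∃ ρ : ℝ, ρ = r / t₀ := ⟨_, rfl⟩
  have hρ0 : 0 < ρ := by rw [hρ]; positivity
  have hρ1 : ‖ρ‖ < 1 := by
    rw [Real.norm_eq_abs, abs_of_pos hρ0, hρ, div_lt_one ht₀]; exact hrt
  have hu : Summable fun k : ℕ => B / r * ((k : ℝ) * ρ ^ k) := by
    refine Summable.mul_left _ ?_
    have := summable_pow_mul_geometric_of_norm_lt_one 1 hρ1
    simpa [pow_one] using this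
  have main := hasDerivAt_tsum_of_isPreconnected (𝕜 := ℝ) (F := ℝ) (α := ℕ)
    (g := fun k z => (μ k).toReal * z ^ k)
    (g' := fun k z => (μ k).toReal * ((k : ℝ) * z ^ (k - 1)))
    (u := fun k : ℕ => B / r * ((k : ℝ) * ρ ^ k)) (y₀ := y) (y := y) (t := Set.Ioo (-r) r)
    hu (isOpen_Ioo) (isPreconnected_Ioo) ?_ ?_ ?_ ?_ ?_
  · exact main
  case _ => intro k z _; exact (hasDerivAt_pow k z).const_mul ((μ k).toReal)
  case _ =>
    intro k z hz
    have hzr : |z| ≤ r := by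
      rw [abs_le]; exact ⟨hz.1.le, hz.2.le⟩
    rw [Real.norm_eq_abs]
    have h1 : |(μ k).toReal * ((k:ℝ) * z ^ (k - 1))| = (μ k).toReal * ((k:ℝ) * |z| ^ (k - 1)) := by
      rw [abs_mul, abs_mul, abs_pow]
      rw [abs_of_nonneg ENNReal.toReal_nonneg, Nat.abs_cast]
    rw [h1]
    have h2 : (μ k).toReal * ((k:ℝ) * |z| ^ (k - 1)) ≤ (μ k).toReal * ((k:ℝ) * r ^ (k - 1)) := by
      gcongr
      all_goals first | exact ENNReal.toReal_nonneg | exact abs_nonneg z | exact hzr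
    refine h2.trans ?_
    rcases Nat.eq_zero_or_pos k with hk | hk
    · subst hk; simp
    · obtain ⟨m, rfl⟩ : ∃ m, k = m + 1 := ⟨k - 1, (Nat.sub_add_cancel hk).symm⟩
      have hc : (μ (m+1)).toReal * t₀ ^ (m+1) ≤ B := hBnn (m+1)
      have h3 : (μ (m+1)).toReal ≤ B / t₀ ^ (m+1) := by
        rw [le_div_iff₀ (by positivity)]; exact hc
      have h4 : (μ (m+1)).toReal * (((m:ℝ)+1) * r ^ (m + 1 - 1))
          ≤ B / t₀ ^ (m+1) * (((m:ℝ)+1) * r ^ m) := by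
        have hmm : (m + 1 - 1) = m := by omega
        rw [hmm]
        exact mul_le_mul_of_nonneg_right h3 (by positivity)
      have h5 : B / t₀ ^ (m+1) * (((m:ℝ)+1) * r ^ m) = B / r * (((m:ℝ)+1) * ρ ^ (m+1)) := by
        rw [hρ, div_pow]
        field_simp
        ring
      calc (μ (m+1)).toReal * ((((m:ℕ)+1 : ℕ):ℝ) * r ^ (m + 1 - 1))
          = (μ (m+1)).toReal * (((m:ℝ)+1) * r ^ (m + 1 - 1)) := by push_cast; ring
        _ ≤ B / r * (((m:ℝ)+1) * ρ ^ (m+1)) := h4.trans_eq h5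
        _ = B / r * ((((m:ℕ)+1 : ℕ):ℝ) * ρ ^ (m+1)) := by push_cast; ring
  case _ => exact Set.mem_Ioo.mpr ⟨by linarith, by linarith⟩
  case _ =>
    refine ht.of_nonneg_of_le (fun k => by positivity) (fun k => ?_)
    show (μ k).toReal * y ^ k ≤ (μ k).toReal * t₀ ^ k
    gcongr
    all_goals first | exact ENNReal.toReal_nonneg | exact h0 | exact hy.le
  case _ => exact Set.mem_Ioo.mpr ⟨by linarith, by linarith⟩



lemma term_toReal (μ : PMF ℕ) {t : ℝ} (ht : 0 ≤ t) (k : ℕ) :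
    (μ k * (ENNReal.ofReal t) ^ k).toReal = (μ k).toReal * t ^ k := by
  rw [ENNReal.toReal_mul, ENNReal.toReal_pow, ENNReal.toReal_ofReal ht]

lemma term_ofReal (μ : PMF ℕ) {t : ℝ} (ht : 0 ≤ t) (k : ℕ) :
    μ k * (ENNReal.ofReal t) ^ k = ENNReal.ofReal ((μ k).toReal * t ^ k) := by
  rw [ENNReal.ofReal_mul ENNReal.toReal_nonneg, ENNReal.ofReal_toReal (μ.apply_ne_top k),
    ← ENNReal.ofReal_pow ht]

lemma eGen_ofReal (μ : PMF ℕ) {t : ℝ} (ht : 0 ≤ t)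
    (h : Summable fun k : ℕ => (μ k).toReal * t ^ k) :
    eGen μ (ENNReal.ofReal t) = ENNReal.ofReal (genFun μ t) := by
  unfold eGen genFun
  rw [ENNReal.ofReal_tsum_of_nonneg (fun k => by positivity) h]
  exact tsum_congr fun k => term_ofReal μ ht k

lemma eGen_ne_top_of_summable (μ : PMF ℕ) {t : ℝ} (ht : 0 ≤ t)
    (h : Summable fun k : ℕ => (μ k).toReal * t ^ k) :
    eGen μ (ENNReal.ofReal t) ≠ ∞ := by
  rw [eGen_ofReal μ ht h]; exact ENNReal.ofReal_ne_top

lemma summable_of_eGen_ne_top (μ : PMF ℕ) {t : ℝ} (ht : 0 ≤ t)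
    (h : eGen μ (ENNReal.ofReal t) ≠ ∞) :
    Summable fun k : ℕ => (μ k).toReal * t ^ k := by
  have := ENNReal.summable_toReal (f := fun k : ℕ => μ k * (ENNReal.ofReal t) ^ k) h
  refine this.congr fun k => term_toReal μ ht k

lemma genFun_eq_toReal (μ : PMF ℕ) {t : ℝ} (ht : 0 ≤ t)
    (h : eGen μ (ENNReal.ofReal t) ≠ ∞) :
    genFun μ t = (eGen μ (ENNReal.ofReal t)).toReal := by
  have hnn : 0 ≤ genFun μ t := tsum_nonneg fun k => by positivity
  rw [eGen_ofReal μ ht (summable_of_eGen_ne_top μ ht h), ENNReal.toReal_ofReal hnn]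

lemma genFun_nu_poly (ν : PMF ℕ) {M : ℕ} (hbd : ∀ k, M < k → ν k = 0) (v : ℝ) :
    genFun ν v = ∑ n ∈ Finset.range (M + 1), (ν n).toReal * v ^ n := by
  unfold genFun
  refine tsum_eq_sum fun n hn => ?_
  rw [hbd n (by simpa [Nat.lt_succ_iff, not_le] using hn)]
  simp

lemma eGen_q (μ ν : PMF ℕ) {M : ℕ} (hbd : ∀ k, M < k → ν k = 0) {t : ℝ} (ht : 0 ≤ t)
    (h : Summable fun k : ℕ => (μ k).toReal * t ^ k) :
    eGen (ν.bind fun n => iidSum μ n) (ENNReal.ofReal t)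
      = ENNReal.ofReal (genFun ν (genFun μ t)) := by
  rw [eGen_bind]
  have hF0 : 0 ≤ genFun μ t := tsum_nonneg fun k => by positivity
  have h1 : ∀ n : ℕ, ν n * (eGen μ (ENNReal.ofReal t)) ^ n
      = ENNReal.ofReal ((ν n).toReal * (genFun μ t) ^ n) := by
    intro n
    rw [eGen_ofReal μ ht h, ← ENNReal.ofReal_pow hF0,
      ENNReal.ofReal_mul ENNReal.toReal_nonneg, ENNReal.ofReal_toReal (ν.apply_ne_top n)]
  calc ∑' n, ν n * (eGen (iidSum μ n)) (ENNReal.ofReal t)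
      = ∑' n, ENNReal.ofReal ((ν n).toReal * (genFun μ t) ^ n) := by
        refine tsum_congr fun n => ?_
        rw [eGen_iidSum, h1 n]
    _ = ∑ n ∈ Finset.range (M + 1), ENNReal.ofReal ((ν n).toReal * (genFun μ t) ^ n) := by
        refine tsum_eq_sum fun n hn => ?_
        rw [hbd n (by simpa [Nat.lt_succ_iff, not_le] using hn)]
        simp
    _ = ENNReal.ofReal (∑ n ∈ Finset.range (M + 1), (ν n).toReal * (genFun μ t) ^ n) := by
        rw [ENNReal.ofReal_sum_of_nonneg fun n _ => by positivity]
    _ = ENNReal.ofReal (genFun ν (genFun μ t)) := by rw [genFun_nu_poly ν hbd]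

lemma tsum_ite_range (f : ℕ → ℝ≥0∞) (a : ℕ) :
    ∑' k : ℕ, (if k < a then f k else 0) = ∑ p ∈ Finset.range a, f p := by
  rw [tsum_eq_sum (s := Finset.range a)
    (fun k hk => by rw [if_neg (by simpa using hk)])]
  exact Finset.sum_congr rfl fun p hp => by rw [if_pos (Finset.mem_range.mp hp)]

lemma key_ennreal (q : PMF ℕ) (a : ℕ) (x : ℝ≥0∞) :
    eGen (q.map (fun y => y - a)) x * x ^ a + ∑ p ∈ Finset.range a, q p * x ^ p
      = eGen q x + ∑ p ∈ Finset.range a, q p * x ^ a := by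
  rw [eGen_map]
  unfold eGen
  rw [← ENNReal.tsum_mul_right,
    ← tsum_ite_range (fun p => q p * x ^ p) a, ← tsum_ite_range (fun p => q p * x ^ a) a,
    ← ENNReal.tsum_add, ← ENNReal.tsum_add]
  refine tsum_congr fun k => ?_
  rcases lt_or_ge k a with h | h
  · rw [if_pos h, if_pos h, Nat.sub_eq_zero_of_le h.le, pow_zero]
    ring
  · rw [if_neg (not_lt.mpr h), if_neg (not_lt.mpr h), mul_assoc, ← pow_add,
      Nat.sub_add_cancel h]

lemma drStep_genFun (μ ν : PMF ℕ) {M a : ℕ} (hbd : ∀ k, M < k → ν k = 0) {t : ℝ}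
    (ht : 1 ≤ t) (h : Summable fun k : ℕ => (μ k).toReal * t ^ k) :
    genFun (drStep ν a μ) t * t ^ a
        + ∑ p ∈ Finset.range a, ((ν.bind fun n => iidSum μ n) p).toReal * t ^ p
      = genFun ν (genFun μ t)
        + ∑ p ∈ Finset.range a, ((ν.bind fun n => iidSum μ n) p).toReal * t ^ a := by
  have ht0 : (0:ℝ) ≤ t := le_trans zero_le_one ht
  set q : PMF ℕ := ν.bind fun n => iidSum μ n with hqdef
  set x : ℝ≥0∞ := ENNReal.ofReal t with hxdef
  have hxne : x ≠ ∞ := ENNReal.ofReal_ne_top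
  have hx1 : (1:ℝ≥0∞) ≤ x := by
    rw [hxdef, ENNReal.one_le_ofReal]; exact ht
  have hq : eGen q x = ENNReal.ofReal (genFun ν (genFun μ t)) := eGen_q μ ν hbd ht0 h
  have hkey := key_ennreal q a x
  have hRne : eGen q x + ∑ p ∈ Finset.range a, q p * x ^ a ≠ ∞ := by
    rw [hq]
    refine ENNReal.add_ne_top.mpr ⟨ENNReal.ofReal_ne_top, ?_⟩
    rw [← lt_top_iff_ne_top]
    refine ENNReal.sum_lt_top.mpr fun p _ => ?_
    exact lt_top_iff_ne_top.mpr (ENNReal.mul_ne_top (q.apply_ne_top p) (ENNReal.pow_ne_top hxne))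
  have hLne := hkey ▸ hRne
  have hprodne : eGen (q.map (fun y => y - a)) x * x ^ a ≠ ∞ := (ENNReal.add_ne_top.mp hLne).1
  have hsum1ne : (∑ p ∈ Finset.range a, q p * x ^ p) ≠ ∞ := (ENNReal.add_ne_top.mp hLne).2
  have hμ'ne : eGen (q.map (fun y => y - a)) x ≠ ∞ := by
    intro hcon
    rw [hcon] at hprodne
    exact hprodne (ENNReal.top_mul (pow_ne_zero a (lt_of_lt_of_le zero_lt_one hx1).ne'))
  have hdr : drStep ν a μ = q.map (fun y => y - a) := rfl
  -- apply toReal to hkey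
  have hFnn : 0 ≤ genFun μ t := tsum_nonneg fun k => by positivity
  have hGnn : 0 ≤ genFun ν (genFun μ t) :=
    tsum_nonneg fun n => mul_nonneg ENNReal.toReal_nonneg (pow_nonneg hFnn n)
  have := congrArg ENNReal.toReal hkey
  rw [ENNReal.toReal_add hprodne hsum1ne, ENNReal.toReal_add (hq ▸ ENNReal.ofReal_ne_top)
      ((ENNReal.add_ne_top.mp hRne).2),
    ENNReal.toReal_mul, ENNReal.toReal_pow, hxdef, ENNReal.toReal_ofReal ht0,
    ENNReal.toReal_sum (fun p _ => ENNReal.mul_ne_top (q.apply_ne_top p) (ENNReal.pow_ne_top hxne)),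
    ENNReal.toReal_sum (fun p _ => ENNReal.mul_ne_top (q.apply_ne_top p) (ENNReal.pow_ne_top hxne)),
    hq, ENNReal.toReal_ofReal hGnn] at this
  rw [hdr, genFun_eq_toReal _ ht0 (hxdef ▸ hμ'ne)]
  rw [← hxdef] at this ⊢
  have hs1 : ∑ p ∈ Finset.range a, (q p * x ^ p).toReal
      = ∑ p ∈ Finset.range a, (q p).toReal * t ^ p :=
    Finset.sum_congr rfl fun p _ => term_toReal q ht0 p
  have hs2 : ∑ p ∈ Finset.range a, (q p * x ^ a).toReal
      = ∑ p ∈ Finset.range a, (q p).toReal * t ^ a :=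
    Finset.sum_congr rfl fun p _ => by
      rw [ENNReal.toReal_mul, ENNReal.toReal_pow, hxdef, ENNReal.toReal_ofReal ht0]
  rw [hs1, hs2] at this
  linarith [this]







/-- PMF has a nonzero value. -/
lemma PMF.exists_ne_zero (μ : PMF ℕ) : ∃ k, μ k ≠ 0 := by
  by_contra hall
  push_neg at hall
  have := μ.tsum_coe
  simp [hall] at this

lemma genFun_pos (μ : PMF ℕ) {t : ℝ} (ht : 0 < t)
    (h : Summable fun k : ℕ => (μ k).toReal * t ^ k) : 0 < genFun μ t := by
  obtain ⟨k₀, hk₀⟩ := μ.exists_ne_zero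
  have hterm : 0 < (μ k₀).toReal * t ^ k₀ := by
    have := ENNReal.toReal_pos hk₀ (μ.apply_ne_top k₀)
    positivity
  exact lt_of_lt_of_le hterm (Summable.le_tsum h k₀ fun j _ => by positivity)

lemma final_algebra {M A s F d G G' T0 T1 K L : ℝ}
    (hs : 0 < s) (hF : 0 < F) (hd : 0 ≤ d) (hM1 : 0 ≤ M - 1)
    (hK : 0 < K) (hKL : L * s = K)
    (hFG : F * G' ≤ M * G)
    (hT : (M - 1) * s * T1 - M * A * T0 ≤ 0) :
    (M - 1) * s * (((G' * d + T1) * K - (G + T0) * (A * L)) / K ^ 2) - A * ((G + T0) / K)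
      ≤ M * G / (F * K) * ((M - 1) * s * d - A * F) := by
  have hFK : 0 < F * K := mul_pos hF hK
  have key : F * ((M - 1) * s * (G' * d + T1) - M * A * (G + T0))
      ≤ M * G * ((M - 1) * s * d - A * F) := by
    have t1 : ((M - 1) * s * d) * (F * G') ≤ ((M - 1) * s * d) * (M * G) :=
      mul_le_mul_of_nonneg_left hFG (by positivity)
    have t2 : F * ((M - 1) * s * T1 - M * A * T0) ≤ 0 :=
      mul_nonpos_of_nonneg_of_nonpos hF.le hT
    nlinarith [t1, t2]
  have h2 : F * ((M - 1) * s * (G' * d + T1) - M * A * (G + T0)) / (F * K)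
      ≤ M * G * ((M - 1) * s * d - A * F) / (F * K) := by gcongr
  calc (M - 1) * s * (((G' * d + T1) * K - (G + T0) * (A * L)) / K ^ 2) - A * ((G + T0) / K)
      = F * ((M - 1) * s * (G' * d + T1) - M * A * (G + T0)) / (F * K) := by
        rw [← hKL]
        have hL : L ≠ 0 := by
          intro h0; rw [h0, zero_mul] at hKL; exact hK.ne' hKL.symm
        field_simp
        ring
    _ ≤ M * G * ((M - 1) * s * d - A * F) / (F * K) := h2
    _ = M * G / (F * K) * ((M - 1) * s * d - A * F) := by ring

lemma bracket_nonpos {M a p : ℕ} {s : ℝ} (ha : 1 ≤ a) (hM : 2 ≤ M) (hp : p < a)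
    (hs : 1 + ((M : ℝ) - 1) / (a : ℝ) ≤ s) :
    ((M:ℝ) - 1) * s * (a * s ^ (a - 1) - p * s ^ (p - 1)) - M * a * (s ^ a - s ^ p) ≤ 0 := by
  have ha' : (1:ℝ) ≤ (a:ℝ) := by exact_mod_cast ha
  have hM1 : (1:ℝ) ≤ (M:ℝ) - 1 := by
    have : (2:ℝ) ≤ (M:ℝ) := by exact_mod_cast hM
    linarith
  have hs1 : 1 < s := by
    have : 0 < ((M:ℝ) - 1) / (a:ℝ) := div_pos (by linarith) (by linarith)
    linarith
  have hs0 : 0 < s := by linarith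
  have hsa : (M:ℝ) - 1 ≤ (a:ℝ) * (s - 1) := by
    have h1 : ((M:ℝ) - 1) / (a:ℝ) ≤ s - 1 := by linarith
    have h2 := (div_le_iff₀ (show (0:ℝ) < (a:ℝ) by positivity)).mp h1
    nlinarith [h2]
  have hap : (0:ℝ) ≤ (a:ℝ) - (p:ℝ) := by
    have : (p:ℝ) ≤ (a:ℝ) := by exact_mod_cast hp.le
    linarith
  have hcast : ((a - p : ℕ) : ℝ) = (a:ℝ) - (p:ℝ) := by
    rw [Nat.cast_sub hp.le]
  have hB : 1 + ((a:ℝ) - (p:ℝ)) * (s - 1) ≤ s ^ (a - p) := by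
    have hB' := one_add_mul_le_pow (a := s - 1) (by linarith) (a - p)
    rw [hcast, show 1 + (s - 1) = s by ring] at hB'
    exact hB'
  have hmain : (a:ℝ) + ((M:ℝ) - 1) * ((a:ℝ) - (p:ℝ)) ≤ (a:ℝ) * s ^ (a - p) := by
    nlinarith [mul_le_mul_of_nonneg_left hB (by positivity : (0:ℝ) ≤ (a:ℝ)),
      mul_le_mul_of_nonneg_left hsa hap]
  have hsplit : s ^ a = s ^ p * s ^ (a - p) := by
    rw [← pow_add, Nat.add_sub_cancel' hp.le]
  have hps : s * (p * s ^ (p - 1)) = p * s ^ p := by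
    rcases Nat.eq_zero_or_pos p with h0 | h0
    · subst h0; simp
    · rw [show p = p - 1 + 1 from (Nat.sub_add_cancel h0).symm]
      simp [pow_succ]
      ring
  have has : s * ((a:ℝ) * s ^ (a - 1)) = a * s ^ a := by
    rw [show a = a - 1 + 1 from (Nat.sub_add_cancel ha).symm]
    simp [pow_succ]
    ring
  have hsp : (0:ℝ) < s ^ p := by positivity
  nlinarith [mul_le_mul_of_nonneg_right hmain hsp.le, hps, has, hsplit]

lemma step_ineq (μ ν : PMF ℕ) {M a : ℕ} (ha : 1 ≤ a) (hM : 2 ≤ M)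
    (hbd : ∀ k, M < k → ν k = 0)
    {s : ℝ} (hs : 1 + ((M : ℝ) - 1) / (a : ℝ) ≤ s)
    (hFs : Summable fun k : ℕ => (μ k).toReal * s ^ k)
    (hds : DifferentiableAt ℝ (genFun μ) s) :
    ((M:ℝ) - 1) * s * deriv (genFun (drStep ν a μ)) s - a * genFun (drStep ν a μ) s
      ≤ M * genFun ν (genFun μ s) / (genFun μ s * s ^ a)
        * (((M:ℝ) - 1) * s * deriv (genFun μ) s - a * genFun μ s) := by
  have ha' : (1:ℝ) ≤ (a:ℝ) := by exact_mod_cast ha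
  have hM1 : (1:ℝ) ≤ (M:ℝ) - 1 := by
    have : (2:ℝ) ≤ (M:ℝ) := by exact_mod_cast hM
    linarith
  have hs1 : 1 < s := by
    have : 0 < ((M:ℝ) - 1) / (a:ℝ) := div_pos (by linarith) (by linarith)
    linarith
  have hs0 : 0 < s := by linarith
  obtain ⟨t₀, hst₀, ht₀⟩ := exists_summable_gt μ hs1.le hFs hds.continuousAt
  -- summability near s
  have hnear : ∀ t ∈ Set.Ioo (1:ℝ) t₀, Summable fun k : ℕ => (μ k).toReal * t ^ k := by
    intro t htm
    have h1 : (0:ℝ) ≤ t := by linarith [htm.1]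
    refine ht₀.of_nonneg_of_le
      (fun k => mul_nonneg ENNReal.toReal_nonneg (pow_nonneg h1 k)) (fun k => ?_)
    have h2 : t ^ k ≤ t₀ ^ k := pow_le_pow_left₀ h1 (le_of_lt (htm.2)) k
    have := ENNReal.toReal_nonneg (a := μ k)
    nlinarith
  -- derivative of F at s
  have hFd : HasDerivAt (genFun μ) (∑' k : ℕ, (μ k).toReal * (k * s ^ (k - 1))) s :=
    hasDerivAt_genFun μ (by linarith) hst₀ ht₀
  set d : ℝ := ∑' k : ℕ, (μ k).toReal * (k * s ^ (k - 1)) with hddef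
  have hd0 : 0 ≤ d := tsum_nonneg fun k => by positivity
  set F : ℝ := genFun μ s with hFdef
  have hFpos : 0 < F := genFun_pos μ hs0 hFs
  -- polynomial G and its derivative
  set G : ℝ := genFun ν F with hGdef
  set G' : ℝ := ∑ n ∈ Finset.range (M + 1), (ν n).toReal * (n * F ^ (n - 1)) with hG'def
  have hνpoly : genFun ν = fun v => ∑ n ∈ Finset.range (M + 1), (ν n).toReal * v ^ n :=
    funext (genFun_nu_poly ν hbd)
  have hGd : HasDerivAt (genFun ν) G' F := by
    rw [hνpoly, hG'def]
    exact HasDerivAt.fun_sum fun n _ => (hasDerivAt_pow n F).const_mul _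
  have hGpos : 0 < G := by
    obtain ⟨n₀, hn₀⟩ := ν.exists_ne_zero
    have hn₀M : n₀ ≤ M := by
      by_contra hcon
      exact hn₀ (hbd n₀ (by omega))
    have hterm : 0 < (ν n₀).toReal * F ^ n₀ := by
      have := ENNReal.toReal_pos hn₀ (ν.apply_ne_top n₀)
      positivity
    rw [hGdef, hνpoly]
    calc (0:ℝ) < (ν n₀).toReal * F ^ n₀ := hterm
      _ ≤ ∑ n ∈ Finset.range (M + 1), (ν n).toReal * F ^ n := by
          refine Finset.single_le_sum (f := fun n => (ν n).toReal * F ^ n)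
            (fun n _ => by positivity) ?_
          simp [Nat.lt_succ_iff, hn₀M]
  have hFG : F * G' ≤ (M:ℝ) * G := by
    rw [hGdef, hνpoly, hG'def, Finset.mul_sum, Finset.mul_sum]
    refine Finset.sum_le_sum fun n hn => ?_
    have hnM : (n:ℝ) ≤ (M:ℝ) := by
      exact_mod_cast Nat.lt_succ_iff.mp (Finset.mem_range.mp hn)
    have hterm : F * ((ν n).toReal * ((n:ℝ) * F ^ (n - 1))) = (n:ℝ) * ((ν n).toReal * F ^ n) := by
      rcases Nat.eq_zero_or_pos n with h0 | h0
      · subst h0; simp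
      · rw [show n = n - 1 + 1 from (Nat.sub_add_cancel h0).symm]
        simp [pow_succ]
        ring
    rw [hterm]
    have h1 : (0:ℝ) ≤ (ν n).toReal * F ^ n := by positivity
    calc (n:ℝ) * ((ν n).toReal * F ^ n) ≤ (M:ℝ) * ((ν n).toReal * F ^ n) :=
          mul_le_mul_of_nonneg_right hnM h1
      _ = (M:ℝ) * ((ν n).toReal * F ^ n) := rfl
  -- the function R and eventual equality
  set Q : ℕ → ℝ := fun p => ((ν.bind fun n => iidSum μ n) p).toReal with hQdef
  set R : ℝ → ℝ := fun t =>
    (genFun ν (genFun μ t) + ∑ p ∈ Finset.range a, Q p * (t ^ a - t ^ p)) / t ^ a with hRdef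
  have hmem : s ∈ Set.Ioo (1:ℝ) t₀ := ⟨hs1, hst₀⟩
  have hEvEq : ∀ t ∈ Set.Ioo (1:ℝ) t₀, genFun (drStep ν a μ) t = R t := by
    intro t htm
    have ht1 : (1:ℝ) ≤ t := htm.1.le
    have ht0' : (0:ℝ) < t := by linarith [htm.1]
    have hid := drStep_genFun μ ν (a := a) hbd ht1 (hnear t htm)
    rw [hRdef]
    rw [eq_div_iff (by positivity)]
    have : ∑ p ∈ Finset.range a, Q p * (t ^ a - t ^ p)
        = ∑ p ∈ Finset.range a, Q p * t ^ a - ∑ p ∈ Finset.range a, Q p * t ^ p := by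
      rw [← Finset.sum_sub_distrib]
      exact Finset.sum_congr rfl fun p _ => by ring
    rw [this]
    rw [hQdef]
    linarith [hid]
  have hEv : genFun (drStep ν a μ) =ᶠ[nhds s] R := by
    filter_upwards [isOpen_Ioo.mem_nhds hmem] with t htm
    exact hEvEq t htm
  -- derivative of R at s
  have hcomp : HasDerivAt (fun t => genFun ν (genFun μ t)) (G' * d) s := by
    have := hGd.comp s hFd
    exact this
  set T1 : ℝ := ∑ p ∈ Finset.range a, Q p * ((a:ℝ) * s ^ (a - 1) - (p:ℝ) * s ^ (p - 1))
    with hT1def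
  set T0 : ℝ := ∑ p ∈ Finset.range a, Q p * (s ^ a - s ^ p) with hT0def
  have hnum : HasDerivAt (fun t => genFun ν (genFun μ t)
      + ∑ p ∈ Finset.range a, Q p * (t ^ a - t ^ p)) (G' * d + T1) s := by
    refine hcomp.add ?_
    rw [hT1def]
    exact HasDerivAt.fun_sum fun p _ =>
      (((hasDerivAt_pow a s).sub (hasDerivAt_pow p s)).const_mul (Q p))
  have hden : HasDerivAt (fun t : ℝ => t ^ a) ((a:ℝ) * s ^ (a - 1)) s := hasDerivAt_pow a s
  have hRd : HasDerivAt R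
      (((G' * d + T1) * s ^ a - (genFun ν (genFun μ s) + T0) * ((a:ℝ) * s ^ (a - 1)))
        / (s ^ a) ^ 2) s := by
    rw [hRdef]
    exact hnum.div hden (by positivity)
  have hderiv1 : deriv (genFun (drStep ν a μ)) s
      = ((G' * d + T1) * s ^ a - (G + T0) * ((a:ℝ) * s ^ (a - 1))) / (s ^ a) ^ 2 := by
    rw [hEv.deriv_eq]
    exact hRd.deriv
  have hval1 : genFun (drStep ν a μ) s = (G + T0) / s ^ a := by
    rw [hEvEq s hmem, hRdef]
  have hderivF : deriv (genFun μ) s = d := hFd.deriv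
  -- the sum inequality
  have hT : ((M:ℝ) - 1) * s * T1 - (M:ℝ) * (a:ℝ) * T0 ≤ 0 := by
    rw [hT1def, hT0def, Finset.mul_sum, Finset.mul_sum, ← Finset.sum_sub_distrib]
    refine Finset.sum_nonpos fun p hp => ?_
    have hpa : p < a := Finset.mem_range.mp hp
    have hQnn : 0 ≤ Q p := ENNReal.toReal_nonneg
    have hbr := bracket_nonpos ha hM hpa hs
    nlinarith [mul_le_mul_of_nonneg_left hbr hQnn]
  -- conclude
  rw [hderiv1, hval1, hderivF]
  have hKL : s ^ (a - 1) * s = s ^ a := by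
    rw [← pow_succ, Nat.sub_add_cancel ha]
  have := final_algebra (M := (M:ℝ)) (A := (a:ℝ)) (s := s) (F := F) (d := d) (G := G)
    (G' := G') (T0 := T0) (T1 := T1) (K := s ^ a) (L := s ^ (a - 1))
    hs0 hFpos hd0 (by linarith) (by positivity) hKL hFG hT
  calc ((M:ℝ) - 1) * s * (((G' * d + T1) * s ^ a - (G + T0) * ((a:ℝ) * s ^ (a - 1)))
          / (s ^ a) ^ 2) - (a:ℝ) * ((G + T0) / s ^ a)
      = ((M:ℝ) - 1) * s * (((G' * d + T1) * s ^ a - (G + T0) * ((a:ℝ) * s ^ (a - 1)))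
          / (s ^ a) ^ 2) - (a:ℝ) * ((G + T0) / s ^ a) := rfl
    _ ≤ (M:ℝ) * G / (F * s ^ a) * (((M:ℝ) - 1) * s * d - (a:ℝ) * F) := this

lemma genFun_nu_pos (ν : PMF ℕ) {M : ℕ} (hbd : ∀ k, M < k → ν k = 0) {v : ℝ} (hv : 0 < v) :
    0 < genFun ν v := by
  obtain ⟨n₀, hn₀⟩ := ν.exists_ne_zero
  have hn₀M : n₀ ≤ M := by
    by_contra hcon
    exact hn₀ (hbd n₀ (by omega))
  have hterm : 0 < (ν n₀).toReal * v ^ n₀ := by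
    have := ENNReal.toReal_pos hn₀ (ν.apply_ne_top n₀)
    positivity
  rw [genFun_nu_poly ν hbd]
  calc (0:ℝ) < (ν n₀).toReal * v ^ n₀ := hterm
    _ ≤ ∑ n ∈ Finset.range (M + 1), (ν n).toReal * v ^ n := by
        refine Finset.single_le_sum (f := fun n => (ν n).toReal * v ^ n)
          (fun n _ => by positivity) ?_
        simp [Nat.lt_succ_iff, hn₀M]


/-- with `N ≤ M` a.s. and `D_n(s) = (M−1)sF'_n(s) − aF_n(s)`, for every
`s ≥ 1 + (M−1)/a`: `D_{n+1}(s) ≤ (MG(F_n(s))/(F_n(s)s^a))·D_n(s)`; in particular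
`D_0(s) < 0` implies `D_n(s) < 0` for all `n`. -/
theorem dr_D_recursive_upper_bound (ν μ0 : PMF ℕ) (a M : ℕ) (ha : 1 ≤ a) (hM : 2 ≤ M)
    (hν0 : ν 0 = 0) (hbd : ∀ k, M < k → ν k = 0)
    (s : ℝ) (hs : 1 + ((M : ℝ) - 1) / (a : ℝ) ≤ s)
    (hF : ∀ n, Summable fun k : ℕ => ((drSeq ν μ0 a n) k).toReal * s ^ k)
    (hd : ∀ n, DifferentiableAt ℝ (genFun (drSeq ν μ0 a n)) s) :
    (∀ n, ((M : ℝ) - 1) * s * deriv (genFun (drSeq ν μ0 a (n + 1))) s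
            - a * genFun (drSeq ν μ0 a (n + 1)) s
        ≤ M * genFun ν (genFun (drSeq ν μ0 a n) s) / (genFun (drSeq ν μ0 a n) s * s ^ a)
            * (((M : ℝ) - 1) * s * deriv (genFun (drSeq ν μ0 a n)) s
                - a * genFun (drSeq ν μ0 a n) s)) ∧
    ((((M : ℝ) - 1) * s * deriv (genFun μ0) s - a * genFun μ0 s < 0) →
      ∀ n, ((M : ℝ) - 1) * s * deriv (genFun (drSeq ν μ0 a n)) s
            - a * genFun (drSeq ν μ0 a n) s < 0) := by
  have ha' : (1:ℝ) ≤ (a:ℝ) := by exact_mod_cast ha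
  have hM1 : (1:ℝ) ≤ (M:ℝ) - 1 := by
    have : (2:ℝ) ≤ (M:ℝ) := by exact_mod_cast hM
    linarith
  have hs1 : 1 < s := by
    have : 0 < ((M:ℝ) - 1) / (a:ℝ) := div_pos (by linarith) (by linarith)
    linarith
  have hs0 : 0 < s := by linarith
  have hstep : ∀ n, ((M : ℝ) - 1) * s * deriv (genFun (drSeq ν μ0 a (n + 1))) s
            - a * genFun (drSeq ν μ0 a (n + 1)) s
        ≤ M * genFun ν (genFun (drSeq ν μ0 a n) s) / (genFun (drSeq ν μ0 a n) s * s ^ a)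
            * (((M : ℝ) - 1) * s * deriv (genFun (drSeq ν μ0 a n)) s
                - a * genFun (drSeq ν μ0 a n) s) := by
    intro n
    have h := step_ineq (drSeq ν μ0 a n) ν ha hM hbd hs (hF n) (hd n)
    simpa only [drSeq] using h
  refine ⟨hstep, fun hD0 n => ?_⟩
  induction n with
  | zero => exact hD0
  | succ n ih =>
    refine lt_of_le_of_lt (hstep n) ?_
    refine mul_neg_of_pos_of_neg ?_ ih
    have hFpos : 0 < genFun (drSeq ν μ0 a n) s := genFun_pos _ hs0 (hF n)
    have hGpos : 0 < genFun ν (genFun (drSeq ν μ0 a n) s) := genFun_nu_pos ν hbd hFpos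
    have hMpos : (0:ℝ) < (M:ℝ) := by linarith
    exact div_pos (mul_pos hMpos hGpos) (mul_pos hFpos (pow_pos hs0 a))
end
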